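/- arXiv:0906.1151 — 14 statements merged into one kernel-verified Lean document; each statement's English description precedes it below -/
import Mathlib

section
/- Every LR-algebra is Lie admissible: in an LR-algebra A, the commutator [x,y] = x·y − y·x satisfies the Jacobi identity, hence defines a Lie bracket on A. -/
/-- Every LR-algebra is Lie admissible: the commutator `x·y − y·x`
satisfies the Jacobi identity. -/
theorem lr_lie_admissible {k A : Type*} [Field k] [CharZero k]
    [AddCommGroup A] [Module k A]
    (mul : A →ₗ[k] A →ₗ[k] A)
    (hL : ∀ x y z : A, mul x (mul y z) = mul y (mul x z))
    (hR : ∀ x y z : A, mul (mul x y) z = mul (mul x z) y) :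
    ∀ x y z : A,
      (mul x (mul y z - mul z y) - mul (mul y z - mul z y) x) +
      (mul y (mul z x - mul x z) - mul (mul z x - mul x z) y) +
      (mul z (mul x y - mul y x) - mul (mul x y - mul y x) z) = 0 := by
  intro x y z
  simp only [map_sub, LinearMap.sub_apply]
  rw [hL x y z, hL x z y, hL y z x, hR z y x, hR x z y, hR y x z]
  abel
end

section
/- In an LR-algebra A, for all x,y,z ∈ A one has R(x)∘R(y·z) = R((y·x)·z), where R denotes the right multiplication operator. -/
/-- In an LR-algebra, `R(x) ∘ R(y·z) = R((y·x)·z)`. -/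
theorem lr_R_comp_R {k A : Type*} [Field k] [CharZero k]
    [AddCommGroup A] [Module k A]
    (mul : A →ₗ[k] A →ₗ[k] A)
    (hL : ∀ x y z : A, mul x (mul y z) = mul y (mul x z))
    (hR : ∀ x y z : A, mul (mul x y) z = mul (mul x z) y)
    (x y z : A) :
    (mul.flip x) ∘ₗ (mul.flip (mul y z)) = mul.flip (mul (mul y x) z) := by
  ext a
  simp only [LinearMap.coe_comp, Function.comp_apply, LinearMap.flip_apply]
  rw [hL a y z, hR y (mul a z) x, hL (mul y x) a z]
end

section
/- In an LR-algebra A, the identity (x·y)·(u·v) − (u·v)·(x·y) = 0 holds for all x,y,u,v ∈ A; equivalently, the subspace A·A is commutative for the commutator bracket. -/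
/-- In an LR-algebra, `(x·y)·(u·v) − (u·v)·(x·y) = 0` for all `x,y,u,v`. -/
theorem lr_products_commute {k A : Type*} [Field k] [CharZero k]
    [AddCommGroup A] [Module k A]
    (mul : A →ₗ[k] A →ₗ[k] A)
    (hL : ∀ x y z : A, mul x (mul y z) = mul y (mul x z))
    (hR : ∀ x y z : A, mul (mul x y) z = mul (mul x z) y)
    (x y u v : A) :
    mul (mul x y) (mul u v) - mul (mul u v) (mul x y) = 0 := by
  have h1 : mul (mul x y) (mul u v) = mul (mul u y) (mul x v) := by
    rw [hR x y (mul u v), hL x u v, hR u (mul x v) y]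
  have h2 : mul (mul u v) (mul x y) = mul (mul u y) (mul x v) := by
    rw [hL (mul u v) x y, hR u v y, hL x (mul u y) v]
  rw [h1, h2, sub_self]
end

section
/- If a Lie algebra g over a field of characteristic zero admits an LR-structure, then g is 2-step solvable, i.e. [[g,g],[g,g]] = 0. -/
/-- A Lie algebra admitting an LR-structure is 2-step solvable. -/
theorem lr_twoStepSolvable {k g : Type*} [Field k] [CharZero k]
    [LieRing g] [LieAlgebra k g]
    (mul : g →ₗ[k] g →ₗ[k] g)
    (hL : ∀ x y z : g, mul x (mul y z) = mul y (mul x z))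
    (hR : ∀ x y z : g, mul (mul x y) z = mul (mul x z) y)
    (hcompat : ∀ x y : g, mul x y - mul y x = ⁅x, y⁆) :
    ∀ a b c d : g, ⁅⁅a, b⁆, ⁅c, d⁆⁆ = 0 := by
  intro a b c d
  rw [← hcompat ⁅a, b⁆ ⁅c, d⁆, ← hcompat a b, ← hcompat c d]
  simp only [map_sub, LinearMap.sub_apply]
  linear_combination (norm := module)
    - hL (mul c a) b d
    + hL (mul d a) b c
    + hL (mul c b) a d
    - hL (mul d b) a c
    - hL (mul c d) a b
    + hL (mul c d) b a
    + hL (mul d c) a b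
    - hL (mul d c) b a
    - hR a (mul c d) b
    + hR a (mul d c) b
    + hR b (mul c d) a
    - hR b (mul d c) a
    + hR c (mul a d) b
    - hR c (mul b d) a
    - hR d (mul a c) b
    + hR d (mul b c) a
    - congrArg (fun t => mul t a) (hL b c d)
    + congrArg (fun t => mul t a) (hL b d c)
    + congrArg (fun t => mul a t) (hR c b d)
    - congrArg (fun t => mul a t) (hR d b c)
    + congrArg (fun t => mul t b) (hL a c d)
    - congrArg (fun t => mul t b) (hL a d c)
    - congrArg (fun t => mul b t) (hR c a d)
    + congrArg (fun t => mul b t) (hR d a c)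
end

section
/- Let (A,·) be an LR-structure on a finite-dimensional Lie algebra g over a field of characteristic zero. If all left multiplications L(x) and all right multiplications R(x) are nilpotent operators, then the Lie algebra g is nilpotent. -/
/-- If all left and right multiplications of an LR-structure on `g` are
nilpotent, then `g` is a nilpotent Lie algebra. -/
theorem lr_nilpotent_of_L_R_nilpotent {k g : Type*} [Field k] [CharZero k]
    [LieRing g] [LieAlgebra k g] [FiniteDimensional k g]
    (mul : g →ₗ[k] g →ₗ[k] g)
    (hL : ∀ x y z : g, mul x (mul y z) = mul y (mul x z))
    (hR : ∀ x y z : g, mul (mul x y) z = mul (mul x z) y)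
    (hcompat : ∀ x y : g, mul x y - mul y x = ⁅x, y⁆)
    (hLnil : ∀ x : g, IsNilpotent (mul x : Module.End k g))
    (hRnil : ∀ x : g, IsNilpotent (mul.flip x : Module.End k g)) :
    LieRing.IsNilpotent g := by
  -- `B` is the span of all products `a · b`.
  set B : Submodule k g := Submodule.span k {z : g | ∃ a b : g, mul a b = z} with hB
  have hgen : ∀ a b : g, mul a b ∈ B := fun a b => Submodule.subset_span ⟨a, b, rfl⟩
  -- `B` is invariant under every left multiplication.
  have hLinv : ∀ x : g, ∀ w ∈ B, mul x w ∈ B := by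
    intro x w hw
    induction hw using Submodule.span_induction with
    | mem z hz => obtain ⟨a, b, rfl⟩ := hz; exact hgen x (mul a b)
    | zero => simp
    | add u v hu hv hu' hv' => simpa [map_add] using B.add_mem hu' hv'
    | smul c u hu hu' => simpa [map_smul] using B.smul_mem c hu'
  -- `B` is invariant under every right multiplication.
  have hRinv : ∀ x : g, ∀ w ∈ B, mul w x ∈ B := by
    intro x w hw
    induction hw using Submodule.span_induction with
    | mem z hz => obtain ⟨a, b, rfl⟩ := hz; exact hgen (mul a b) x
    | zero => simp
    | add u v hu hv hu' hv' => simpa [LinearMap.add_apply] using B.add_mem hu' hv'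
    | smul c u hu hu' => simpa [LinearMap.smul_apply] using B.smul_mem c hu'
  -- On `B`, the operators `L(x)` and `R(x)` commute.
  have hcomm : ∀ x : g, ∀ w ∈ B, mul x (mul w x) = mul (mul x w) x := by
    intro x w hw
    induction hw using Submodule.span_induction with
    | mem z hz =>
      obtain ⟨a, b, rfl⟩ := hz
      calc mul x (mul (mul a b) x) = mul x (mul (mul a x) b) := by rw [hR a b x]
        _ = mul (mul a x) (mul x b) := hL x (mul a x) b
        _ = mul (mul a (mul x b)) x := (hR a (mul x b) x).symm
        _ = mul (mul x (mul a b)) x := by rw [hL x a b]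
    | zero => simp
    | add u v hu hv hu' hv' => simp only [map_add, LinearMap.add_apply, hu', hv']
    | smul c u hu hu' => simp only [map_smul, LinearMap.smul_apply, hu']
  rw [LieAlgebra.isNilpotent_iff_forall (R := k)]
  intro x
  -- Restrictions of `L(x)` and `R(x)` to `B`.
  set l : B →ₗ[k] B := (mul x).restrict (hLinv x) with hl
  set r : B →ₗ[k] B := (mul.flip x).restrict (hRinv x) with hr
  have hlr : Commute l r := by
    ext w
    simp only [Module.End.mul_apply, hl, hr, LinearMap.restrict_coe_apply,
      LinearMap.flip_apply]
    exact hcomm x w.1 w.2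
  have hlnil : IsNilpotent l := by
    obtain ⟨n, hn⟩ := hLnil x
    refine ⟨n, ?_⟩
    ext w
    rw [hl, Module.End.pow_restrict n (hLinv x), LinearMap.restrict_coe_apply, hn]
    simp
  have hrnil : IsNilpotent r := by
    obtain ⟨n, hn⟩ := hRnil x
    refine ⟨n, ?_⟩
    ext w
    rw [hr, Module.End.pow_restrict n (hRinv x), LinearMap.restrict_coe_apply, hn]
    simp
  obtain ⟨m, hm⟩ := hlr.isNilpotent_sub hlnil hrnil
  -- `ad x` coincides with `l - r` on `B`.
  have key : ∀ n : ℕ, ∀ w : B, ((LieAlgebra.ad k g x) ^ n) (w : g) = (((l - r) ^ n) w : g) := by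
    intro n
    induction n with
    | zero => intro w; simp
    | succ n ih =>
      intro w
      rw [pow_succ', Module.End.mul_apply, LieAlgebra.ad_apply, ih w,
        pow_succ', Module.End.mul_apply]
      have : ((((l - r) (((l - r) ^ n) w)) : B) : g)
          = mul x ((((l - r) ^ n) w : B) : g) - mul ((((l - r) ^ n) w : B) : g) x := by
        simp only [LinearMap.sub_apply, Submodule.coe_sub, hl, hr,
          LinearMap.restrict_coe_apply, LinearMap.flip_apply]
        rfl
      rw [this, hcompat]
  refine ⟨m + 1, ?_⟩
  ext z
  have hz : ⁅x, z⁆ ∈ B := by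
    rw [← hcompat x z]
    exact B.sub_mem (hgen x z) (hgen z x)
  rw [pow_succ, Module.End.mul_apply, LieAlgebra.ad_apply,
    show ⁅x, z⁆ = ((⟨⁅x, z⁆, hz⟩ : B) : g) from rfl, key m, hm]
  simp
end

section
/- Let (A,·) be an LR-structure on a finite-dimensional nilpotent Lie algebra g over a field of characteristic zero. If all right multiplications R(x) are nilpotent, then all left multiplications L(x) are nilpotent. -/
/-- For an LR-structure on a nilpotent Lie algebra, if all right
multiplications are nilpotent then all left multiplications are nilpotent. -/
theorem lr_L_nilpotent_of_R_nilpotent {k g : Type*} [Field k] [CharZero k]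
    [LieRing g] [LieAlgebra k g] [FiniteDimensional k g]
    [LieRing.IsNilpotent g]
    (mul : g →ₗ[k] g →ₗ[k] g)
    (hL : ∀ x y z : g, mul x (mul y z) = mul y (mul x z))
    (hR : ∀ x y z : g, mul (mul x y) z = mul (mul x z) y)
    (hcompat : ∀ x y : g, mul x y - mul y x = ⁅x, y⁆)
    (hRnil : ∀ x : g, IsNilpotent (mul.flip x : Module.End k g)) :
    ∀ x : g, IsNilpotent (mul x : Module.End k g) := by
  intro x
  obtain ⟨N, hN⟩ := hRnil x
  obtain ⟨M, hM⟩ := LieModule.IsNilpotent.nilpotent k g g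
  set R : Module.End k g := mul.flip x with hRdef
  set L : Module.End k g := mul x with hLdef
  -- the basic identity: R ⁅z, v⁆ = ⁅z, R v⁆ + ⁅R z, v⁆
  have key : ∀ z v : g, R ⁅z, v⁆ = ⁅z, R v⁆ + ⁅R z, v⁆ := by
    intro z v
    have hz : R z = mul z x := rfl
    have hv : R v = mul v x := rfl
    have h1 : R ⁅z, v⁆ = mul ⁅z, v⁆ x := rfl
    rw [h1, hz, hv, ← hcompat z v, ← hcompat z (mul v x), ← hcompat (mul z x) v]
    simp only [map_sub, LinearMap.sub_apply]
    rw [hR z v x, hR v z x, hL v z x]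
    abel
  -- L v = R v + ⁅x, v⁆
  have hLR : ∀ v : g, L v = R v + ⁅x, v⁆ := by
    intro v
    have := hcompat x v
    have h1 : L v = mul x v := rfl
    have h2 : R v = mul v x := rfl
    rw [h1, h2, ← this]; abel
  -- notation for the lower central series viewed as submodules
  set C : ℕ → Submodule k g := fun i => (LieModule.lowerCentralSeries k g g i).toSubmodule with hC
  have hC0 : ∀ v : g, v ∈ C 0 := by
    intro v
    simp [hC, LieModule.lowerCentralSeries_zero]
  have hCanti : ∀ i, C (i + 1) ≤ C i := by
    intro i
    intro v hv
    have h1 : v ∈ LieModule.lowerCentralSeries k g g (i + 1) := hv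
    exact LieModule.antitone_lowerCentralSeries k g g (Nat.le_succ i) h1
  have hCD : ∀ i, ∀ w : g, ∀ v ∈ C i, ⁅w, v⁆ ∈ C (i + 1) := by
    intro i w v hv
    have h1 : v ∈ LieModule.lowerCentralSeries k g g i := hv
    have h2 : ⁅w, v⁆ ∈ LieModule.lowerCentralSeries k g g (i + 1) := by
      rw [LieModule.lowerCentralSeries_succ]
      exact LieSubmodule.lie_mem_lie (LieSubmodule.mem_top w) h1
    exact h2
  -- R preserves each term of the lower central series
  have hCR : ∀ i, ∀ v ∈ C i, R v ∈ C i := by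
    intro i
    induction i with
    | zero => intro v _; exact hC0 _
    | succ i ih =>
      intro v hv
      have hspan : C (i + 1) =
          Submodule.span k { m | ∃ z ∈ (⊤ : LieIdeal k g),
            ∃ n ∈ LieModule.lowerCentralSeries k g g i, ⁅z, n⁆ = m } := by
        rw [hC]
        dsimp only
        rw [LieModule.lowerCentralSeries_succ]
        exact LieSubmodule.lieIdeal_oper_eq_linear_span' ..
      rw [hspan] at hv
      refine Submodule.span_induction ?_ ?_ ?_ ?_ hv
      · rintro m ⟨z, -, n, hn, rfl⟩
        rw [key z n]
        have h1 : ⁅z, R n⁆ ∈ C (i + 1) := hCD i z (R n) (ih n hn)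
        have h2 : ⁅R z, n⁆ ∈ C (i + 1) := hCD i (R z) n hn
        exact add_mem h1 h2
      · simp
      · intro a b _ _ ha hb
        rw [map_add]; exact add_mem ha hb
      · intro c a _ ha
        rw [map_smul]; exact Submodule.smul_mem _ c ha
  -- L^j v ≡ R^j v mod C (i+1) for v ∈ C i
  have step : ∀ i, ∀ v ∈ C i, ∀ j : ℕ, (L ^ j) v - (R ^ j) v ∈ C (i + 1) ∧ (L ^ j) v ∈ C i := by
    intro i v hv j
    induction j with
    | zero => simpa using hv
    | succ j ih =>
      obtain ⟨ih1, ih2⟩ := ih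
      have hRj : (R ^ j) v ∈ C i := by
        have : (L ^ j) v - ((L ^ j) v - (R ^ j) v) = (R ^ j) v := by abel
        rw [← this]
        exact sub_mem ih2 (hCanti i ih1)
      have e1 : (L ^ (j + 1)) v = L ((L ^ j) v) := by
        rw [pow_succ']; rfl
      have e2 : (R ^ (j + 1)) v = R ((R ^ j) v) := by
        rw [pow_succ']; rfl
      constructor
      · rw [e1, e2, hLR ((L ^ j) v)]
        have : R ((L ^ j) v) + ⁅x, (L ^ j) v⁆ - R ((R ^ j) v)
            = R ((L ^ j) v - (R ^ j) v) + ⁅x, (L ^ j) v⁆ := by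
          rw [map_sub]; abel
        rw [this]
        exact add_mem (hCR (i + 1) _ ih1) (hCD i x _ ih2)
      · rw [e1, hLR ((L ^ j) v)]
        exact add_mem (hCR i _ ih2) (hCanti i (hCD i x _ ih2))
  -- iterate: L^(N*m) maps into C m
  have main : ∀ m : ℕ, ∀ v : g, (L ^ (N * m)) v ∈ C m := by
    intro m
    induction m with
    | zero => intro v; simpa using hC0 v
    | succ m ih =>
      intro v
      have e : (L ^ (N * (m + 1))) v = (L ^ N) ((L ^ (N * m)) v) := by
        have : N * (m + 1) = N + N * m := by ring
        rw [this, pow_add]; rfl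
      rw [e]
      have h1 := (step m ((L ^ (N * m)) v) (ih v) N).1
      have h2 : (R ^ N) ((L ^ (N * m)) v) = 0 := by rw [hN]; rfl
      have : (L ^ N) ((L ^ (N * m)) v) =
          (L ^ N) ((L ^ (N * m)) v) - (R ^ N) ((L ^ (N * m)) v) := by
        rw [h2]; abel
      rw [this]
      exact h1
  refine ⟨N * M, ?_⟩
  ext v
  have hv := main M v
  rw [hC] at hv
  simp only [hM] at hv
  simpa using hv
end

section
/- Let (A,·) be an LR-structure on a finite-dimensional nilpotent Lie algebra g over a field of characteristic zero. If all left multiplications L(x) are nilpotent, then all right multiplications R(x) are nilpotent. -/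
/-- For an LR-structure on a nilpotent Lie algebra, if all left
multiplications are nilpotent then all right multiplications are nilpotent. -/
theorem lr_R_nilpotent_of_L_nilpotent {k g : Type*} [Field k] [CharZero k]
    [LieRing g] [LieAlgebra k g] [FiniteDimensional k g]
    [LieRing.IsNilpotent g]
    (mul : g →ₗ[k] g →ₗ[k] g)
    (hL : ∀ x y z : g, mul x (mul y z) = mul y (mul x z))
    (hR : ∀ x y z : g, mul (mul x y) z = mul (mul x z) y)
    (hcompat : ∀ x y : g, mul x y - mul y x = ⁅x, y⁆)
    (hLnil : ∀ x : g, IsNilpotent (mul x : Module.End k g)) :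
    ∀ x : g, IsNilpotent (mul.flip x : Module.End k g) := by
  intro x
  obtain ⟨N, hN⟩ := hLnil x
  set Z : ℕ → LieSubmodule k g g := fun i => (⊥ : LieSubmodule k g g).ucs i with hZ
  -- left multiplications preserve each term of the upper central series
  have hL_inv : ∀ i (y : g), ∀ v ∈ Z i, mul y v ∈ Z i := by
    intro i
    induction i with
    | zero =>
      intro y v hv
      simp only [hZ, LieSubmodule.ucs_zero, LieSubmodule.mem_bot] at hv ⊢
      simp [hv]
    | succ i ih =>
      intro y v hv
      simp only [hZ, LieSubmodule.ucs_succ] at hv ⊢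
      rw [LieSubmodule.mem_normalizer] at hv ⊢
      intro x'
      have key : ⁅x', mul y v⁆ = mul y ⁅x', v⁆ - ⁅mul y x', v⁆ := by
        rw [← hcompat, ← hcompat, ← hcompat, map_sub]
        rw [hL x' y v, hR y v x', hL y v x']
        abel
      rw [key]
      exact sub_mem (ih y _ (hv x')) (hv (mul y x'))
  -- powers of the left multiplication by x preserve each term
  have hLpow : ∀ i j, ∀ v ∈ Z i, ((mul x) ^ j) v ∈ Z i := by
    intro i j
    induction j with
    | zero => intro v hv; simpa using hv
    | succ j ih =>
      intro v hv
      rw [pow_succ, Module.End.mul_apply]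
      exact ih _ (hL_inv i x v hv)
  -- R^j v - L^j v lies one step down the series
  have hdiff : ∀ i j, ∀ v ∈ Z (i + 1),
      ((mul.flip x) ^ j) v - ((mul x) ^ j) v ∈ Z i := by
    intro i j
    induction j with
    | zero => intro v hv; simp
    | succ j ih =>
      intro v hv
      have hd := ih v hv
      have hLj : ((mul x) ^ j) v ∈ Z (i + 1) := hLpow (i + 1) j v hv
      have hlie : ⁅x, ((mul x) ^ j) v⁆ ∈ Z i := by
        have : Z (i + 1) = (Z i).normalizer := by
          simp only [hZ]; exact LieSubmodule.ucs_succ _ _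
        rw [this, LieSubmodule.mem_normalizer] at hLj
        exact hLj x
      have e1 : ((mul.flip x) ^ (j + 1)) v - ((mul x) ^ (j + 1)) v =
          (mul.flip x) (((mul.flip x) ^ j) v - ((mul x) ^ j) v)
          + ((mul.flip x) (((mul x) ^ j) v) - (mul x) (((mul x) ^ j) v)) := by
        rw [pow_succ', pow_succ']
        simp only [Module.End.mul_apply, map_sub]
        abel
      rw [e1]
      refine add_mem (?_) ?_
      · -- R d = L d - ⁅x, d⁆ with d ∈ Z i
        have e2 : (mul.flip x) (((mul.flip x) ^ j) v - ((mul x) ^ j) v) =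
            mul x (((mul.flip x) ^ j) v - ((mul x) ^ j) v)
            - ⁅x, ((mul.flip x) ^ j) v - ((mul x) ^ j) v⁆ := by
          rw [← hcompat]; simp [LinearMap.flip_apply]
        rw [e2]
        exact sub_mem (hL_inv i x _ hd) ((Z i).lie_mem hd)
      · have e3 : (mul.flip x) (((mul x) ^ j) v) - (mul x) (((mul x) ^ j) v) =
            - ⁅x, ((mul x) ^ j) v⁆ := by
          rw [← hcompat]; simp [LinearMap.flip_apply]
        rw [e3]
        exact neg_mem hlie
  have hstep : ∀ i, ∀ v ∈ Z (i + 1), ((mul.flip x) ^ N) v ∈ Z i := by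
    intro i v hv
    have := hdiff i N v hv
    have hz : ((mul x) ^ N) v = 0 := by rw [hN]; rfl
    rwa [hz, sub_zero] at this
  have hmain : ∀ i, ∀ v ∈ Z i, ((mul.flip x) ^ (N * i)) v = 0 := by
    intro i
    induction i with
    | zero =>
      intro v hv
      simp only [hZ, LieSubmodule.ucs_zero, LieSubmodule.mem_bot] at hv
      simp [hv]
    | succ i ih =>
      intro v hv
      have : N * (i + 1) = N * i + N := by ring
      rw [this, pow_add, Module.End.mul_apply]
      exact ih _ (hstep i v hv)
  obtain ⟨c, hc⟩ : ∃ c, Z c = ⊤ :=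
    (LieModule.isNilpotent_iff_exists_ucs_eq_top (R := k)).mp
      (by infer_instance : LieModule.IsNilpotent g g)
  refine ⟨N * c, ?_⟩
  ext v
  exact hmain c v (by rw [hc]; trivial)
end

section
/- Let A be a finite-dimensional LR-algebra over an algebraically closed field of characteristic zero whose associated Lie algebra is nilpotent, and suppose the commuting family of left multiplication operators has a single weight α which is nonzero. Then A contains a nonzero idempotent element a with a·a = a. -/
/-- A finite-dimensional LR-algebra over an algebraically closed field of
characteristic zero, with nilpotent associated Lie algebra, on which the
commuting left multiplications have a single nonzero weight, contains a
nonzero idempotent. -/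
theorem lr_exists_idempotent {k A : Type*} [Field k] [CharZero k] [IsAlgClosed k]
    [LieRing A] [LieAlgebra k A] [FiniteDimensional k A]
    [LieRing.IsNilpotent A]
    (mul : A →ₗ[k] A →ₗ[k] A)
    (hL : ∀ x y z : A, mul x (mul y z) = mul y (mul x z))
    (hR : ∀ x y z : A, mul (mul x y) z = mul (mul x z) y)
    (hcompat : ∀ x y : A, mul x y - mul y x = ⁅x, y⁆)
    (α : A →ₗ[k] k) (hα : α ≠ 0)
    (hweight : ∀ x : A, IsNilpotent ((mul x : Module.End k A) - α x • 1)) :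
    ∃ a : A, a ≠ 0 ∧ mul a a = a := by
  -- pick x with α x ≠ 0
  obtain ⟨x, hx⟩ : ∃ x, α x ≠ 0 := by
    by_contra h
    push_neg at h
    exact hα (LinearMap.ext fun y => h y)
  have hx0 : x ≠ 0 := fun h => hx (by simp [h])
  -- L(x) is a unit
  have hunit : IsUnit (mul x : Module.End k A) := by
    have hN := hweight x
    have hscal : IsUnit ((α x) • (1 : Module.End k A)) := by
      have : (α x) • (1 : Module.End k A) = algebraMap k (Module.End k A) (α x) := by
        simp [Algebra.algebraMap_eq_smul_one]
      rw [this]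
      exact (isUnit_iff_ne_zero.mpr hx).map (algebraMap k (Module.End k A))
    have hcomm : Commute ((mul x : Module.End k A) - α x • 1) ((α x) • (1 : Module.End k A)) := by
      apply Commute.smul_right
      exact Commute.one_right _
    have := hN.isUnit_add_left_of_commute hscal hcomm
    simpa using this
  have hsurj : Function.Surjective (mul x : Module.End k A) :=
    (Module.End.isUnit_iff (mul x : Module.End k A)).mp hunit |>.surjective
  obtain ⟨e, he⟩ := hsurj x
  -- right multiplication by e is the identity
  have hid : ∀ w : A, mul w e = w := by
    intro w
    obtain ⟨z, hz⟩ := hsurj w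
    have := hR x e z
    rw [he] at this
    rw [← hz, ← this, hz]
  refine ⟨e, ?_, hid e⟩
  intro h
  rw [h] at he
  simp at he
  exact hx0 he.symm
end

section
/- Let A be a finite-dimensional LR-algebra over an algebraically closed field of characteristic zero whose associated Lie algebra is nilpotent. If the commuting family of left multiplications has a single nonzero weight on A, then A is commutative (x·y = y·x for all x,y), and hence the associated Lie algebra is abelian. -/
attribute [local instance 100] LieRing.ofAssociativeRing

/-- A finite-dimensional LR-algebra over an algebraically closed field of
characteristic zero, with nilpotent associated Lie algebra, on which the
left multiplications have a single nonzero weight, is commutative; hence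
the associated Lie algebra is abelian. -/
theorem lr_single_weight_commutative {k A : Type*} [Field k] [CharZero k] [IsAlgClosed k]
    [LieRing A] [LieAlgebra k A] [FiniteDimensional k A]
    [LieModule.IsNilpotent A A]
    (mul : A →ₗ[k] A →ₗ[k] A)
    (hL : ∀ x y z : A, mul x (mul y z) = mul y (mul x z))
    (hR : ∀ x y z : A, mul (mul x y) z = mul (mul x z) y)
    (hcompat : ∀ x y : A, mul x y - mul y x = ⁅x, y⁆)
    (α : A →ₗ[k] k) (hα : α ≠ 0)
    (hweight : ∀ x : A, IsNilpotent ((mul x : Module.End k A) - α x • 1)) :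
    (∀ x y : A, mul x y = mul y x) ∧ ∀ x y : A, ⁅x, y⁆ = 0 := by
  -- pick e with α e = 1
  obtain ⟨a, ha⟩ : ∃ a : A, α a ≠ 0 := by
    by_contra h
    push_neg at h
    exact hα (LinearMap.ext fun x => h x)
  set e : A := (α a)⁻¹ • a with he
  have hαe : α e = 1 := by
    simp [he, inv_mul_cancel₀ ha]
  have hN : IsNilpotent ((mul e : Module.End k A) - 1) := by
    have := hweight e
    rwa [hαe, one_smul] at this
  -- key composition identities in the endomorphism ring
  have hLR : ∀ x y : A, (mul x : Module.End k A) * (mul.flip y) = mul.flip (mul x y) := by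
    intro x y
    ext z
    simpa using hL x z y
  have hRL : ∀ x y : A, (mul.flip y : Module.End k A) * (mul x) = mul (mul x y) := by
    intro x y
    ext z
    simpa using (hR x y z).symm
  have hLL : ∀ x y : A, (mul x : Module.End k A) * (mul y) = (mul y : Module.End k A) * mul x := by
    intro x y
    ext z
    simpa using hL x y z
  -- F y = L y - R y
  set F : A →ₗ[k] Module.End k A := mul - mul.flip with hF
  -- the adjoint action of L e on End is nilpotent
  set D : Module.End k (Module.End k A) :=
    LieAlgebra.ad k (Module.End k A) (mul e : Module.End k A) with hDdef
  have hD : IsNilpotent D := by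
    have h1 : D = LieAlgebra.ad k (Module.End k A) ((mul e : Module.End k A) - 1) := by
      ext T
      simp only [hDdef, LieAlgebra.ad_apply, Ring.lie_def]
      noncomm_ring
    rw [h1]
    exact LieAlgebra.ad_nilpotent_of_nilpotent hN
  -- the key intertwining identity
  have hDF : ∀ y : A, D (F y) = F (mul e y) := by
    intro y
    simp only [hDdef, LieAlgebra.ad_apply, Ring.lie_def, hF, LinearMap.sub_apply]
    rw [mul_sub, sub_mul, hLR, hRL, hLL]
    abel
  have hpow : ∀ (m : ℕ) (y : A), (D ^ m) (F y) = F (((mul e : Module.End k A) ^ m) y) := by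
    intro m
    induction m with
    | zero => intro y; simp
    | succ n ih =>
      intro y
      rw [pow_succ, pow_succ', Module.End.mul_apply, Module.End.mul_apply, hDF, ih]
      congr 1
      rw [← Module.End.mul_apply, ← Module.End.mul_apply, ← pow_succ, ← pow_succ']
  obtain ⟨m, hm⟩ := hD
  -- L e is invertible, hence so is its m-th power
  have hu : IsUnit ((mul e : Module.End k A) ^ m) := by
    have : IsUnit (1 + ((mul e : Module.End k A) - 1)) := hN.isUnit_one_add
    simpa using this.pow m
  have hsurj : Function.Surjective (((mul e : Module.End k A) ^ m : Module.End k A) : A → A) :=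
    ((Module.End.isUnit_iff _).mp hu).surjective
  have hF0 : ∀ y : A, F y = 0 := by
    intro y
    obtain ⟨z, hz⟩ := hsurj y
    rw [← hz, ← hpow m z, hm]
    simp
  have hcomm : ∀ x y : A, mul x y = mul y x := by
    intro x y
    have := congrArg (fun T : Module.End k A => T y) (hF0 x)
    simp only [hF, LinearMap.sub_apply, LinearMap.flip_apply, LinearMap.zero_apply] at this
    exact sub_eq_zero.mp this
  refine ⟨hcomm, fun x y => ?_⟩
  rw [← hcompat x y, hcomm x y, sub_self]
end

section
/- In an LR-algebra A with nonzero idempotent a such that L(a) is invertible, the element a is a right identity of A (x·a = x for all x ∈ A), and consequently A is commutative. -/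
/-- In an LR-algebra with a nonzero idempotent `a` such that `L(a)` is
invertible, `a` is a right identity and the algebra is commutative. -/
theorem lr_idempotent_right_identity {k A : Type*} [Field k] [CharZero k]
    [AddCommGroup A] [Module k A]
    (mul : A →ₗ[k] A →ₗ[k] A)
    (hL : ∀ x y z : A, mul x (mul y z) = mul y (mul x z))
    (hR : ∀ x y z : A, mul (mul x y) z = mul (mul x z) y)
    (a : A) (ha : a ≠ 0) (hidem : mul a a = a)
    (hinv : IsUnit (mul a : Module.End k A)) :
    (∀ x : A, mul x a = x) ∧ ∀ x y : A, mul x y = mul y x := by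
  have surj : ∀ x : A, ∃ w, mul a w = x := by
    obtain ⟨u, hu⟩ := hinv
    intro x
    refine ⟨u.inv x, ?_⟩
    have h1 : (u.val * u.inv : Module.End k A) x = x := by
      rw [u.val_inv]; rfl
    rw [hu] at h1
    simpa [Module.End.mul_apply] using h1
  have hrid : ∀ x : A, mul x a = x := by
    intro x
    obtain ⟨w, hw⟩ := surj x
    rw [← hw, hR a w a, hidem]
  refine ⟨hrid, fun x y => ?_⟩
  calc mul x y = mul x (mul y a) := by rw [hrid]
    _ = mul y (mul x a) := hL x y a
    _ = mul y x := by rw [hrid]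
end

section
/- Let g be a finite-dimensional nilpotent Lie algebra over a field of characteristic zero. If g admits an LR-structure, then g admits a complete LR-structure, i.e. one in which all right multiplication operators are nilpotent. Moreover the complete LR-product ∘ can be chosen with g∘g ⊆ g·g, where · is the original LR-product. -/
open Module Submodule

universe u v
set_option maxHeartbeats 1000000

private theorem lr_aux {k : Type v} [Field k] :
    ∀ (n : ℕ) (V : Type u) [AddCommGroup V] [Module k V] [FiniteDimensional k V],
      Module.finrank k V ≤ n →
      ∀ mul : V →ₗ[k] V →ₗ[k] V,
      (∀ x y z : V, mul x (mul y z) = mul y (mul x z)) →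
      (∀ x y z : V, mul (mul x y) z = mul (mul x z) y) →
      (∀ x : V, IsNilpotent (mul x - mul.flip x)) →
      ∃ mul' : V →ₗ[k] V →ₗ[k] V,
        (∀ x y z : V, mul' x (mul' y z) = mul' y (mul' x z)) ∧
        (∀ x y z : V, mul' (mul' x y) z = mul' (mul' x z) y) ∧
        (∀ x y : V, mul' x y - mul' y x = mul x y - mul y x) ∧
        (∀ x : V, IsNilpotent (mul'.flip x)) ∧
        (∀ x y : V, mul' x y ∈ Submodule.span k {z : V | ∃ a b : V, z = mul a b}) := by
  intro n
  induction n with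
  | zero =>
    intro V _ _ _ hn mul hL hR hAd
    have hfr : Module.finrank k V = 0 := Nat.le_zero.mp hn
    have hsub : Subsingleton V := (Module.finrank_zero_iff).mp hfr
    exact ⟨mul, hL, hR, fun _ _ => rfl,
      fun x => ⟨1, by rw [pow_one]; exact LinearMap.ext fun w => Subsingleton.elim _ _⟩,
      fun x y => Submodule.subset_span ⟨x, y, rfl⟩⟩
  | succ n ih =>
    intro V _ _ _ hn mul hL hR hAd
    by_cases hnil : ∀ y : V, IsNilpotent (mul.flip y)
    · exact ⟨mul, hL, hR, fun _ _ => rfl, hnil,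
        fun x y => Submodule.subset_span ⟨x, y, rfl⟩⟩
    push_neg at hnil
    obtain ⟨y₀, hy₀⟩ := hnil
    -- Basic identities
    have hRc : ∀ y z : V, (mul.flip y) * (mul.flip z) = (mul.flip z) * (mul.flip y) := by
      intro y z; ext x
      simp only [Module.End.mul_apply, LinearMap.flip_apply]
      exact hR x z y
    have idRL : ∀ x y : V, mul.flip (mul x y) = (mul x) * (mul.flip y) := by
      intro x y; ext z
      simp only [Module.End.mul_apply, LinearMap.flip_apply]
      exact hL z x y
    have idLR : ∀ x y : V, mul (mul x y) = (mul.flip y) * (mul x) := by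
      intro x y; ext z
      simp only [Module.End.mul_apply, LinearMap.flip_apply]
      exact hR x y z
    set a : Module.End k V := mul.flip y₀ with ha
    have Lpow : ∀ (m : ℕ) (w : V), mul ((a ^ m) w) = a ^ m * mul w := by
      intro m
      induction m with
      | zero => intro w; simp
      | succ m ihm =>
        intro w
        have h1 : (a ^ (m+1)) w = (a ^ m) (a w) := by
          rw [pow_succ]; rfl
        have h2 : mul (a w) = a * mul w := idLR w y₀
        rw [h1, ihm (a w), h2, ← mul_assoc, pow_succ]
    have Rpow : ∀ (m : ℕ) (w : V), mul.flip ((a ^ (m+1)) w) = a ^ m * mul w * a := by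
      intro m w
      have h1 : (a ^ (m+1)) w = mul ((a ^ m) w) y₀ := by
        rw [pow_succ']; rfl
      rw [h1, idRL, Lpow m w]
    set N : ℕ := Module.finrank k V with hN
    set G0 : Submodule k V := LinearMap.ker (a ^ N) with hG0
    set G1 : Submodule k V := LinearMap.range (a ^ N) with hG1
    have kerstab : ∀ m, N ≤ m → LinearMap.ker (a ^ m) = G0 := fun m hm =>
      Module.End.ker_pow_eq_ker_pow_finrank_of_le hm
    have hdisj : Disjoint G0 G1 := by
      rw [Submodule.disjoint_def]
      rintro x hx0 ⟨y, rfl⟩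
      have hy : y ∈ LinearMap.ker (a ^ (N + N)) := by
        rw [LinearMap.mem_ker, pow_add, Module.End.mul_apply]
        exact hx0
      rw [kerstab _ (Nat.le_add_right N N)] at hy
      exact hy
    have hcompl : IsCompl G0 G1 := by
      refine ⟨hdisj, codisjoint_iff.mpr ?_⟩
      apply Submodule.eq_top_of_finrank_eq
      have h1 := LinearMap.finrank_range_add_finrank_ker (a ^ N)
      rw [← hG0, ← hG1] at h1
      have h2 := Submodule.finrank_sup_add_finrank_inf_eq G0 G1
      rw [disjoint_iff.mp hdisj, finrank_bot] at h2
      omega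
    have rangestab : LinearMap.range (a ^ (N+1)) = G1 := by
      apply Submodule.eq_of_le_of_finrank_le
      · rw [pow_succ, Module.End.mul_eq_comp]
        exact LinearMap.range_comp_le_range _ _
      · have h1 := LinearMap.finrank_range_add_finrank_ker (a ^ N)
        rw [← hG0, ← hG1] at h1
        have h2 := LinearMap.finrank_range_add_finrank_ker (a ^ (N+1))
        rw [kerstab (N+1) (Nat.le_succ N)] at h2
        omega
    have memG1' : ∀ v ∈ G1, ∃ w, (a ^ (N+1)) w = v := by
      intro v hv
      rw [← rangestab] at hv
      exact hv
    have hcomm : ∀ (z : V) (m : ℕ) (x : V),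
        (a ^ m) (mul x z) = mul ((a ^ m) x) z := by
      intro z m x
      have hc : (a ^ m) * (mul.flip z) = (mul.flip z) * (a ^ m) :=
        (Commute.pow_left (hRc y₀ z) m)
      have := LinearMap.ext_iff.mp hc x
      simpa only [Module.End.mul_apply, LinearMap.flip_apply] using this
    have hinv0 : ∀ (z : V) {u : V}, u ∈ G0 → mul u z ∈ G0 := by
      intro z u hu
      have hu' : (a ^ N) u = 0 := hu
      rw [hG0, LinearMap.mem_ker, hcomm z N u, hu']
      simp
    have hinv1 : ∀ (z : V) {v : V}, v ∈ G1 → mul v z ∈ G1 := by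
      rintro z v ⟨w, rfl⟩
      exact ⟨mul w z, hcomm z N w⟩
    have F3 : ∀ {u v : V}, u ∈ G0 → v ∈ G1 → mul u v = 0 := by
      intro u v hu hv
      obtain ⟨v₁, rfl⟩ := memG1' v hv
      have h1 : mul u ((a^(N+1)) v₁) = (a ^ N) (mul v₁ (a u)) := by
        have := LinearMap.ext_iff.mp (Rpow N v₁) u
        simpa only [Module.End.mul_apply, LinearMap.flip_apply] using this
      have h2 : mul u ((a^(N+1)) v₁) ∈ G0 := hinv0 _ hu
      have h3 : mul v₁ (a u) ∈ LinearMap.ker (a ^ (N + N)) := by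
        rw [LinearMap.mem_ker, pow_add, Module.End.mul_apply, ← h1]
        exact h2
      rw [kerstab _ (Nat.le_add_right N N)] at h3
      rw [h1]
      exact h3
    have keyF : ∀ u₁ v₁ : V,
        mul ((a^(N+1)) u₁) ((a^(N+1)) v₁)
          = (a^N) ((a^(N+1)) (mul u₁ (mul v₁ y₀))) := by
      intro u₁ v₁
      have h1 : mul ((a^(N+1)) u₁) ((a^(N+1)) v₁)
          = (a ^ N) (mul v₁ (a ((a^(N+1)) u₁))) := by
        have := LinearMap.ext_iff.mp (Rpow N v₁) ((a^(N+1)) u₁)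
        simpa only [Module.End.mul_apply, LinearMap.flip_apply] using this
      have h2 : a ((a^(N+1)) u₁) = (a^(N+1+1)) u₁ := by
        conv_rhs => rw [pow_succ']
        rfl
      have h3 : mul v₁ ((a^(N+1+1)) u₁) = (a^(N+1)) (mul u₁ (a v₁)) := by
        have := LinearMap.ext_iff.mp (Rpow (N+1) u₁) v₁
        simpa only [Module.End.mul_apply, LinearMap.flip_apply] using this
      rw [h1, h2, h3]
      rfl
    have F4 : ∀ {u v : V}, u ∈ G1 → v ∈ G1 → mul u v = mul v u := by
      intro u v hu hv
      obtain ⟨u₁, rfl⟩ := memG1' u hu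
      obtain ⟨v₁, rfl⟩ := memG1' v hv
      rw [keyF u₁ v₁, keyF v₁ u₁, hL u₁ v₁ y₀]
    have F2' : ∀ {z : V}, z ∈ G0 → ∃ M, ∀ v ∈ G1, ((mul.flip z) ^ M) v = 0 := by
      intro z hz
      obtain ⟨M, hM⟩ := hAd z
      refine ⟨M, ?_⟩
      have key : ∀ m, ∀ v ∈ G1,
          ((mul.flip z) ^ m) v = ((-1:k)^m) • (((mul z - mul.flip z) ^ m) v)
            ∧ ((mul.flip z) ^ m) v ∈ G1 := by
        intro m
        induction m with
        | zero => intro v hv; simp [hv]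
        | succ m ihm =>
          intro v hv
          have hzv : mul z v = 0 := F3 hz hv
          have hstep : (mul.flip z) v = -((mul z - mul.flip z) v) := by
            simp [LinearMap.sub_apply, LinearMap.flip_apply, hzv]
          have hv1 : (mul.flip z) v ∈ G1 := hinv1 z hv
          obtain ⟨ih1, ih2⟩ := ihm ((mul.flip z) v) hv1
          have e1 : ∀ (f : Module.End k V) (w : V), (f ^ (m+1)) w = (f ^ m) (f w) := by
            intro f w; rw [pow_succ]; rfl
          constructor
          · rw [e1, ih1, hstep, map_neg]
            have e2 : ((mul z - mul.flip z) ^ m) ((mul z - mul.flip z) v)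
                = ((mul z - mul.flip z) ^ (m+1)) v := (e1 _ v).symm
            rw [e2]
            rw [pow_succ (-1 : k) m, mul_smul, neg_one_smul]
          · rw [e1]
            exact ih2
      intro v hv
      obtain ⟨h1, _⟩ := key M v hv
      rw [h1, hM]
      simp
    -- the subalgebra G0
    have hmemV : ∀ (u v : ↥G0), mul ↑u ↑v ∈ G0 := fun u v => hinv0 ↑v u.2
    set mulV : ↥G0 →ₗ[k] ↥G0 →ₗ[k] ↥G0 :=
      LinearMap.mk₂ k (fun u v => (⟨mul ↑u ↑v, hmemV u v⟩ : ↥G0))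
        (by intro m₁ m₂ n₂; apply Subtype.ext
            simp only [Submodule.coe_add, map_add, LinearMap.add_apply])
        (by intro c m n₂; apply Subtype.ext
            simp only [SetLike.val_smul, map_smul, LinearMap.smul_apply])
        (by intro m n₁ n₂; apply Subtype.ext
            simp only [Submodule.coe_add, map_add, LinearMap.add_apply])
        (by intro c m n₂; apply Subtype.ext
            simp only [SetLike.val_smul, map_smul, LinearMap.smul_apply]) with hmulV
    have mulVapp : ∀ (u v : ↥G0), (↑(mulV u v) : V) = mul ↑u ↑v := fun u v => rfl
    have hLV : ∀ x y z : ↥G0, mulV x (mulV y z) = mulV y (mulV x z) := by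
      intro x y z; apply Subtype.ext
      simp only [mulVapp]
      exact hL ↑x ↑y ↑z
    have hRV : ∀ x y z : ↥G0, mulV (mulV x y) z = mulV (mulV x z) y := by
      intro x y z; apply Subtype.ext
      simp only [mulVapp]
      exact hR ↑x ↑y ↑z
    have hAdV : ∀ x : ↥G0, IsNilpotent (mulV x - mulV.flip x) := by
      intro x
      obtain ⟨M, hM⟩ := hAd ↑x
      refine ⟨M, ?_⟩
      have key : ∀ (j : ℕ) (s : ↥G0),
          (((mulV x - mulV.flip x) ^ j) s : V) = ((mul ↑x - mul.flip ↑x) ^ j) ↑s := by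
        intro j
        induction j with
        | zero => intro s; simp
        | succ j ihj =>
          intro s
          have e1 : ∀ (f : Module.End k ↥G0) (w : ↥G0), (f ^ (j+1)) w = (f ^ j) (f w) := by
            intro f w; rw [pow_succ]; rfl
          have e2 : ∀ (f : Module.End k V) (w : V), (f ^ (j+1)) w = (f ^ j) (f w) := by
            intro f w; rw [pow_succ]; rfl
          rw [e1, e2, ihj]
          congr 1
      ext s
      have h0 := key M s
      rw [hM] at h0
      simp only [LinearMap.zero_apply] at h0
      simpa using h0
    have hrank : Module.finrank k ↥G0 ≤ n := by
      have hne : G0 ≠ ⊤ := by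
        intro h
        exact hy₀ ⟨N, LinearMap.ker_eq_top.mp h⟩
      have hlt := Submodule.finrank_lt hne
      omega
    obtain ⟨m2, h2L, h2R, h2c, h2n, h2s⟩ := ih ↥G0 hrank mulV hLV hRV hAdV
    -- projection
    set P : V →ₗ[k] ↥G0 := G0.projectionOnto G1 hcompl with hP
    have hPl : ∀ s : ↥G0, P ↑s = s := fun s =>
      Submodule.projectionOnto_apply_left hcompl s
    have hPr : ∀ {x : V}, x ∈ G1 → P x = 0 := fun hx =>
      Submodule.projectionOnto_apply_of_mem_right hcompl hx
    have hEm : ∀ x : V, x - ↑(P x) ∈ G1 := by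
      intro x
      have hx : x ∈ G0 ⊔ G1 := by rw [hcompl.codisjoint.eq_top]; trivial
      obtain ⟨u, hu, w, hw, rfl⟩ := Submodule.mem_sup.mp hx
      have h1 : P (u + w) = ⟨u, hu⟩ := by
        rw [map_add, hPr hw, add_zero]
        exact hPl ⟨u, hu⟩
      rw [h1]
      simpa using hw
    -- the new product
    set mul' : V →ₗ[k] V →ₗ[k] V :=
      LinearMap.mk₂ k (fun x y => (↑(m2 (P x) (P y)) : V) + mul (x - ↑(P x)) ↑(P y))
        (by
          intro m₁ m₂ n₂
          simp only [map_add, Submodule.coe_add, LinearMap.add_apply]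
          rw [add_sub_add_comm, map_add, LinearMap.add_apply]
          abel)
        (by
          intro c m n₂
          simp only [map_smul, SetLike.val_smul, LinearMap.smul_apply]
          rw [← smul_sub, map_smul, LinearMap.smul_apply, ← smul_add])
        (by
          intro m n₁ n₂
          simp only [map_add, Submodule.coe_add]
          abel)
        (by
          intro c m n₂
          simp only [map_smul, SetLike.val_smul]
          rw [smul_add]) with hmul'
    have mul'app : ∀ x y : V,
        mul' x y = (↑(m2 (P x) (P y)) : V) + mul (x - ↑(P x)) ↑(P y) := fun x y => rfl
    have hG1part : ∀ x y : V, mul (x - ↑(P x)) ↑(P y) ∈ G1 := fun x y =>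
      hinv1 _ (hEm x)
    have hPmul : ∀ x y : V, P (mul' x y) = m2 (P x) (P y) := by
      intro x y
      rw [mul'app, map_add, hPr (hG1part x y), add_zero, hPl]
    have hEmul : ∀ x y : V, mul' x y - ↑(P (mul' x y)) = mul (x - ↑(P x)) ↑(P y) := by
      intro x y
      rw [hPmul, mul'app, add_sub_cancel_left]
    have spanV' : ∀ s t : ↥G0,
        (↑(m2 s t) : V) ∈ span k {z : V | ∃ a b : ↥G0, z = mul ↑a ↑b} := by
      intro s t
      have h := Submodule.mem_map_of_mem (f := G0.subtype) (h2s s t)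
      rw [Submodule.map_span] at h
      refine Submodule.span_mono ?_ h
      rintro _ ⟨w, ⟨c, d, rfl⟩, rfl⟩
      exact ⟨c, d, rfl⟩
    have spanVbig : ∀ s t : ↥G0,
        (↑(m2 s t) : V) ∈ span k {z : V | ∃ a b : V, z = mul a b} := by
      intro s t
      refine Submodule.span_mono ?_ (spanV' s t)
      rintro _ ⟨c, d, rfl⟩
      exact ⟨↑c, ↑d, rfl⟩
    have mulzero0 : ∀ {w : V}, w ∈ G1 →
        ∀ ζ ∈ span k {z : V | ∃ c d : ↥G0, z = mul ↑c ↑d}, mul w ζ = 0 := by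
      intro w hw ζ hζ
      induction hζ using Submodule.span_induction with
      | mem x hx =>
        obtain ⟨c, d, rfl⟩ := hx
        rw [hL w ↑c ↑d]
        exact F3 c.2 (hinv1 ↑d hw)
      | zero => simp
      | add x y hx hy ihx ihy => rw [map_add, ihx, ihy, add_zero]
      | smul c x hx ihx => rw [map_smul, ihx, smul_zero]
    have mulzero : ∀ {w : V}, w ∈ G1 → ∀ (s t : ↥G0), mul w ↑(m2 s t) = 0 :=
      fun hw s t => mulzero0 hw _ (spanV' s t)
    refine ⟨mul', ?_, ?_, ?_, ?_, ?_⟩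
    · -- hL'
      intro x y z
      rw [mul'app x (mul' y z), mul'app y (mul' x z), hPmul y z, hPmul x z,
        mulzero (hEm x) (P y) (P z), mulzero (hEm y) (P x) (P z), add_zero, add_zero]
      exact congrArg Subtype.val (h2L (P x) (P y) (P z))
    · -- hR'
      intro x y z
      rw [mul'app (mul' x y) z, mul'app (mul' x z) y, hEmul x y, hEmul x z,
        hPmul x y, hPmul x z, h2R (P x) (P y) (P z), hR (x - ↑(P x)) ↑(P y) ↑(P z)]
    · -- compat
      intro x y
      have dx : x = ↑(P x) + (x - ↑(P x)) := by abel
      have dy : y = ↑(P y) + (y - ↑(P y)) := by abel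
      have c2coe : (↑(m2 (P x) (P y)) : V) - ↑(m2 (P y) (P x))
          = mul ↑(P x) ↑(P y) - mul ↑(P y) ↑(P x) := by
        have h := congrArg (Subtype.val) (h2c (P x) (P y))
        simpa only [AddSubgroupClass.coe_sub, mulVapp, LinearMap.flip_apply] using h
      have hxy : mul x y = mul ↑(P x) ↑(P y) + mul (x - ↑(P x)) ↑(P y)
          + mul (x - ↑(P x)) (y - ↑(P y)) := by
        conv_lhs => rw [dx, dy]
        simp only [map_add, LinearMap.add_apply]
        rw [F3 (P x).2 (hEm y)]
        abel
      have hyx : mul y x = mul ↑(P y) ↑(P x) + mul (y - ↑(P y)) ↑(P x)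
          + mul (y - ↑(P y)) (x - ↑(P x)) := by
        conv_lhs => rw [dx, dy]
        simp only [map_add, LinearMap.add_apply]
        rw [F3 (P y).2 (hEm x)]
        abel
      calc mul' x y - mul' y x
          = ((↑(m2 (P x) (P y)) : V) - ↑(m2 (P y) (P x)))
            + (mul (x - ↑(P x)) ↑(P y) - mul (y - ↑(P y)) ↑(P x)) := by
            rw [mul'app, mul'app]; abel
        _ = (mul ↑(P x) ↑(P y) - mul ↑(P y) ↑(P x))
            + (mul (x - ↑(P x)) ↑(P y) - mul (y - ↑(P y)) ↑(P x)) := by rw [c2coe]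
        _ = mul x y - mul y x := by
            rw [hxy, hyx, F4 (hEm x) (hEm y)]; abel
    · -- completeness
      intro y
      obtain ⟨m₁, hm₁⟩ := h2n (P y)
      obtain ⟨M₂, hM₂⟩ := F2' (P y).2
      refine ⟨m₁ + M₂, ?_⟩
      have powkey : ∀ (j : ℕ) (x : V),
          ((mul'.flip y) ^ j) x
            = ↑((m2.flip (P y) ^ j) (P x)) + ((mul.flip ↑(P y)) ^ j) (x - ↑(P x))
          ∧ ((mul.flip ↑(P y)) ^ j) (x - ↑(P x)) ∈ G1 := by
        intro j
        induction j with
        | zero =>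
          intro x
          constructor
          · simp only [pow_zero, Module.End.one_apply]; abel
          · simpa using hEm x
        | succ j ihj =>
          intro x
          obtain ⟨ih1, ih2⟩ := ihj x
          have e1 : ∀ {W : Type u} [AddCommGroup W] [Module k W]
              (f : Module.End k W) (w : W), (f ^ (j+1)) w = f ((f ^ j) w) := by
            intro W _ _ f w; rw [pow_succ']; rfl
          have hPw : P (((mul'.flip y) ^ j) x) = (m2.flip (P y) ^ j) (P x) := by
            rw [ih1, map_add, hPl, hPr ih2, add_zero]
          have hEw : ((mul'.flip y) ^ j) x - ↑(P (((mul'.flip y) ^ j) x))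
              = ((mul.flip ↑(P y)) ^ j) (x - ↑(P x)) := by
            rw [hPw, ih1, add_sub_cancel_left]
          constructor
          · rw [e1 (mul'.flip y) x]
            have hflip : mul'.flip y (((mul'.flip y) ^ j) x)
                = mul' (((mul'.flip y) ^ j) x) y := rfl
            rw [hflip, mul'app, hEw, hPw, e1 (m2.flip (P y)) (P x),
              e1 (mul.flip ↑(P y)) (x - ↑(P x))]
            rfl
          · rw [e1 (mul.flip ↑(P y)) (x - ↑(P x))]
            exact hinv1 _ ih2
      ext x
      obtain ⟨h1, _⟩ := powkey (m₁ + M₂) x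
      rw [LinearMap.zero_apply, h1]
      have e2 : ((m2.flip (P y)) ^ (m₁ + M₂)) (P x) = 0 := by
        rw [add_comm m₁ M₂, pow_add, Module.End.mul_apply, hm₁]
        simp
      have e3 : ((mul.flip ↑(P y)) ^ (m₁ + M₂)) (x - ↑(P x)) = 0 := by
        have hG1pow : ((mul.flip ↑(P y)) ^ M₂) (x - ↑(P x)) = 0 := hM₂ _ (hEm x)
        rw [pow_add, Module.End.mul_apply, hG1pow, map_zero]
      rw [e2, e3]
      simp
    · -- span condition
      intro x y
      rw [mul'app]
      exact Submodule.add_mem _ (spanVbig (P x) (P y))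
        (Submodule.subset_span ⟨x - ↑(P x), ↑(P y), rfl⟩)

/-- A finite-dimensional nilpotent Lie algebra admitting an LR-structure
admits a complete LR-structure `∘` with `g∘g ⊆ g·g`. -/
theorem lr_nilpotent_complete {k g : Type*} [Field k] [CharZero k]
    [LieRing g] [LieAlgebra k g] [FiniteDimensional k g]
    [LieRing.IsNilpotent g]
    (mul : g →ₗ[k] g →ₗ[k] g)
    (hL : ∀ x y z : g, mul x (mul y z) = mul y (mul x z))
    (hR : ∀ x y z : g, mul (mul x y) z = mul (mul x z) y)
    (hcompat : ∀ x y : g, mul x y - mul y x = ⁅x, y⁆) :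
    ∃ mul' : g →ₗ[k] g →ₗ[k] g,
      (∀ x y z : g, mul' x (mul' y z) = mul' y (mul' x z)) ∧
      (∀ x y z : g, mul' (mul' x y) z = mul' (mul' x z) y) ∧
      (∀ x y : g, mul' x y - mul' y x = ⁅x, y⁆) ∧
      (∀ x : g, IsNilpotent (mul'.flip x : Module.End k g)) ∧
      (∀ x y : g, mul' x y ∈
        Submodule.span k {z : g | ∃ a b : g, z = mul a b}) := by
  have hAd : ∀ x : g, IsNilpotent (mul x - mul.flip x : Module.End k g) := by
    intro x
    have he : (mul x - mul.flip x : Module.End k g)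
        = (LieModule.toEnd k g g x : g →ₗ[k] g) := by
      ext y
      simp only [LinearMap.sub_apply, LinearMap.flip_apply,
        LieModule.toEnd_apply_apply]
      exact hcompat x y
    rw [he]
    exact LieModule.isNilpotent_toEnd_of_isNilpotent k g g x
  obtain ⟨mul', h1, h2, h3, h4, h5⟩ :=
    lr_aux (Module.finrank k g) g le_rfl mul hL hR hAd
  exact ⟨mul', h1, h2, fun x y => by rw [h3 x y, hcompat], h4, h5⟩
end

section
/- Let g be a finite-dimensional two-step solvable Lie algebra over a field of characteristic zero, and let g^∞ = ⋂_{i≥1} g^i be the intersection of the terms of the lower central series. Then g^∞ is an abelian ideal and the extension 0 → g^∞ → g → g/g^∞ → 0 splits, so g ≅ g^∞ ⋊ (g/g^∞) with g/g^∞ nilpotent. -/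
open Module LinearMap

set_option linter.unusedSectionVars false
set_option maxHeartbeats 1000000

section KeyLemma
universe u
variable {K : Type*} [Field K] [Infinite K]


private lemma bij_of_isCompl_restrict {V : Type*} [AddCommGroup V] [Module K V]
    {p q : Submodule K V} (hpq : IsCompl p q) (f : Module.End K V)
    (hp : ∀ x ∈ p, f x ∈ p) (hq : ∀ x ∈ q, f x ∈ q)
    (h1 : Function.Bijective (f.restrict hp)) (h2 : Function.Bijective (f.restrict hq)) :
    Function.Bijective f := by
  constructor
  · intro v w hvw
    have hsub : f (v - w) = 0 := by rw [map_sub, hvw, sub_self]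
    obtain ⟨a, b, hab, -⟩ := Submodule.existsUnique_add_of_isCompl hpq (v - w)
    have hfa : f (a : V) + f (b : V) = 0 := by rw [← map_add, hab, hsub]
    have hmem : f (a : V) ∈ p ⊓ q := by
      refine ⟨hp _ a.2, ?_⟩
      have : f (a : V) = -f (b : V) := eq_neg_of_add_eq_zero_left hfa
      rw [this]; exact q.neg_mem (hq _ b.2)
    rw [hpq.inf_eq_bot] at hmem
    have hfb : f (b : V) = 0 := by
      have := hfa; rw [Submodule.mem_bot] at hmem; rw [hmem, zero_add] at this; exact this
    rw [Submodule.mem_bot] at hmem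
    have ha0 : a = 0 := by
      apply h1.injective
      apply Subtype.ext
      simp [LinearMap.restrict_apply, hmem]
    have hb0 : b = 0 := by
      apply h2.injective
      apply Subtype.ext
      simp [LinearMap.restrict_apply, hfb]
    have hvw0 : v - w = 0 := by rw [← hab, ha0, hb0]; simp
    exact sub_eq_zero.mp hvw0
  · intro v
    obtain ⟨a, b, hab, -⟩ := Submodule.existsUnique_add_of_isCompl hpq v
    obtain ⟨a', ha'⟩ := h1.surjective a
    obtain ⟨b', hb'⟩ := h2.surjective b
    refine ⟨(a' : V) + (b' : V), ?_⟩
    have ha'' : f (a' : V) = (a : V) := by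
      have := congrArg (Subtype.val) ha'; simpa [LinearMap.restrict_apply] using this
    have hb'' : f (b' : V) = (b : V) := by
      have := congrArg (Subtype.val) hb'; simpa [LinearMap.restrict_apply] using this
    rw [map_add, ha'', hb'', hab]

private lemma commute_key (n : ℕ) :
    ∀ (V : Type u) [AddCommGroup V] [Module K V] [FiniteDimensional K V],
      Module.finrank K V ≤ n →
      ∀ F : Submodule K (Module.End K V),
        (∀ f ∈ F, ∀ g ∈ F, Commute f g) →
        (⨆ f : F, LinearMap.range (f : Module.End K V)) = ⊤ →
        ∃ f ∈ F, Function.Bijective f := by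
  induction n with
  | zero =>
    intro V _ _ _ hrank F _ _
    have : Module.finrank K V = 0 := Nat.le_zero.mp hrank
    haveI : Subsingleton V := Module.finrank_zero_iff.mp this
    exact ⟨0, F.zero_mem, fun a b _ => Subsingleton.elim a b, fun a => ⟨0, Subsingleton.elim _ _⟩⟩
  | succ n IH =>
    intro V _ _ _ hrank F hcomm hspan
    rcases subsingleton_or_nontrivial V with hV | hV
    · exact ⟨0, F.zero_mem, fun a b _ => Subsingleton.elim a b, fun a => ⟨0, Subsingleton.elim _ _⟩⟩
    by_cases hniall : ∀ f ∈ F, IsNilpotent f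
    · -- Engel case: contradiction
      exfalso
      letI : LieRing (Module.End K V) := LieRing.ofAssociativeRing
      let L' : LieSubalgebra K (Module.End K V) :=
        { F with
          lie_mem' := by
            intro x y hx hy
            have h0 : ⁅x, y⁆ = 0 := by
              rw [Ring.lie_def, (hcomm x hx y hy).eq, sub_self]
            show ⁅x, y⁆ ∈ F
            rw [h0]; exact F.zero_mem }
      have hmemL' : ∀ f ∈ F, f ∈ L' := fun f hf => hf
      have hnil' : ∀ x : L', IsNilpotent (LieModule.toEnd K L' V x) := by
        intro x
        have hx : LieModule.toEnd K L' V x = (x : Module.End K V) := by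
          ext v; rfl
        rw [hx]
        exact hniall _ x.2
      have hnilmod : LieModule.IsNilpotent L' V :=
        LieAlgebra.isEngelian_of_isNoetherian V hnil'
      obtain ⟨m, hm⟩ := (LieModule.isNilpotent_iff K L' V).mp hnilmod
      have htop : ∀ j, LieModule.lowerCentralSeries K L' V j = ⊤ := by
        intro j
        induction j with
        | zero => simp
        | succ j ihj =>
          rw [LieModule.lowerCentralSeries_succ, ihj, eq_top_iff]
          intro v _
          have hv : v ∈ (⨆ f : F, LinearMap.range (f : Module.End K V)) := hspan ▸ trivial
          refine Submodule.iSup_induction (motive := fun w => w ∈ (⁅(⊤ : LieIdeal K L'), (⊤ : LieSubmodule K L' V)⁆ : LieSubmodule K L' V)) _ hv ?_ ?_ ?_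
          · rintro f _ ⟨u, rfl⟩
            have : (f : Module.End K V) u = ⁅(⟨(f : Module.End K V), hmemL' _ f.2⟩ : L'), u⁆ := rfl
            rw [this]
            exact LieSubmodule.lie_mem_lie (LieSubmodule.mem_top _) (LieSubmodule.mem_top _)
          · exact zero_mem _
          · intro a b ha hb; exact add_mem ha hb
      have hbot : (⊤ : LieSubmodule K L' V) = ⊥ := by rw [← htop m, hm]
      obtain ⟨v, w, hvw⟩ := exists_pair_ne V
      apply hvw
      have hz : ∀ z : V, z = 0 := by
        intro z
        have : z ∈ (⊥ : LieSubmodule K L' V) := hbot ▸ LieSubmodule.mem_top z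
        simpa using this
      rw [hz v, hz w]
    · push_neg at hniall
      obtain ⟨f, hfF, hfn⟩ := hniall
      obtain ⟨m, hm1, hcompl, hker⟩ : ∃ m, 1 ≤ m ∧
          IsCompl (ker (f ^ m)) (range (f ^ m)) ∧ (⨆ j, ker (f ^ j)) = ker (f ^ m) := by
        obtain ⟨m, hm⟩ := ((f.eventually_isCompl_ker_pow_range_pow).and
          ((f.eventually_iSup_ker_pow_eq).and (Filter.eventually_ge_atTop 1))).exists
        exact ⟨m, hm.2.2, hm.1, hm.2.1⟩
      set Km := ker (f ^ m) with hKm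
      set W := range (f ^ m) with hW
      have hKinv : ∀ g ∈ F, ∀ v ∈ Km, g v ∈ Km := by
        intro g hg v hv
        have hc : (f ^ m) * g = g * (f ^ m) := ((hcomm f hfF g hg).pow_left m).eq
        have : (f ^ m) (g v) = g ((f ^ m) v) := by
          rw [← Module.End.mul_apply, hc, Module.End.mul_apply]
        rw [mem_ker] at hv ⊢
        rw [this, hv, map_zero]
      have hWinv : ∀ g ∈ F, ∀ v ∈ W, g v ∈ W := by
        rintro g hg v ⟨u, rfl⟩
        have hc : (f ^ m) * g = g * (f ^ m) := ((hcomm f hfF g hg).pow_left m).eq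
        exact ⟨g u, by rw [← Module.End.mul_apply, hc, Module.End.mul_apply]⟩
      let ρ : F →ₗ[K] Module.End K Km :=
        { toFun := fun g => (g : Module.End K V).restrict (fun v hv => hKinv g g.2 v hv)
          map_add' := by
            intro a b; ext v
            simp [LinearMap.restrict_apply]
          map_smul' := by
            intro c a; ext v
            simp [LinearMap.restrict_apply] }
      set F' : Submodule K (Module.End K Km) := LinearMap.range ρ with hF'
      have hcomm' : ∀ a ∈ F', ∀ b ∈ F', Commute a b := by
        rintro _ ⟨a, rfl⟩ _ ⟨b, rfl⟩
        refine LinearMap.ext fun v => Subtype.ext ?_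
        have := congrFun (congrArg (DFunLike.coe) ((hcomm a a.2 b b.2).eq)) (v : V)
        simp only [Module.End.mul_apply] at this
        simp [Module.End.mul_apply, ρ, LinearMap.restrict_apply, this]
      set π := Km.projectionOnto W hcompl with hπ
      have hπg : ∀ (g : F) (v : V), π ((g : Module.End K V) v) = (ρ g) (π v) := by
        intro g v
        obtain ⟨a, b, hab, -⟩ := Submodule.existsUnique_add_of_isCompl hcompl v
        have h1 : π v = a := by
          rw [← hab, map_add, Submodule.projectionOnto_apply_left,
            Submodule.projectionOnto_apply_right, add_zero]
        have h2 : (g : Module.End K V) v = (g : Module.End K V) a + (g : Module.End K V) b := by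
          rw [← map_add, hab]
        rw [h2, map_add]
        have h3 : π ((g : Module.End K V) (a : V)) = ⟨(g : Module.End K V) (a : V), hKinv g g.2 _ a.2⟩ :=
          Submodule.projectionOnto_apply_left hcompl ⟨(g : Module.End K V) (a : V), hKinv g g.2 _ a.2⟩
        have h4 : π ((g : Module.End K V) (b : V)) = 0 :=
          Submodule.projectionOnto_apply_right hcompl ⟨(g : Module.End K V) (b : V), hWinv g g.2 _ b.2⟩
        rw [h3, h4, add_zero, h1]
        apply Subtype.ext
        simp [ρ, LinearMap.restrict_apply]
      have hπsurj : Function.Surjective π := fun a =>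
        ⟨(a : V), Submodule.projectionOnto_apply_left hcompl a⟩
      have hspan' : (⨆ a : F', LinearMap.range (a : Module.End K Km)) = ⊤ := by
        rw [eq_top_iff]
        have htop : (⊤ : Submodule K Km) = Submodule.map π ⊤ := by
          rw [Submodule.map_top, LinearMap.range_eq_top.mpr hπsurj]
        rw [htop, ← hspan, Submodule.map_iSup]
        apply iSup_le
        intro g
        have hcomp2 : π ∘ₗ (g : Module.End K V) = (ρ g) ∘ₗ π := LinearMap.ext (hπg g)
        rw [← LinearMap.range_comp, hcomp2, LinearMap.range_comp,
          LinearMap.range_eq_top.mpr hπsurj, Submodule.map_top]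
        exact le_iSup (fun a : F' => LinearMap.range (a : Module.End K Km)) ⟨ρ g, ⟨g, rfl⟩⟩
      have hfm0 : (f ^ m) ≠ 0 := by
        intro h0; exact hfn ⟨m, h0⟩
      have hWne : W ≠ ⊥ := by
        rw [hW, ne_eq, LinearMap.range_eq_bot]; exact hfm0
      have hrankK : Module.finrank K Km ≤ n := by
        have hadd := Submodule.finrank_add_eq_of_isCompl hcompl
        have hWpos : 0 < Module.finrank K W := by
          rw [Module.finrank_pos_iff]
          exact Submodule.nontrivial_iff_ne_bot.mpr hWne
        omega
      obtain ⟨a', ha'F', ha'bij⟩ := IH Km hrankK F' hcomm' hspan'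
      obtain ⟨g, hg⟩ := ha'F'
      -- restrictions to W
      set fW := f.restrict (hWinv f hfF) with hfW
      set gW := (g : Module.End K V).restrict (hWinv g g.2) with hgW
      have hfWinj : Function.Injective fW := by
        rw [← LinearMap.ker_eq_bot]
        rw [eq_bot_iff]
        rintro ⟨v, hvW⟩ hv
        rw [mem_ker] at hv
        have hfv : f v = 0 := congrArg Subtype.val hv
        have hvK : v ∈ Km := by
          rw [hKm, mem_ker]
          obtain ⟨m', rfl⟩ : ∃ m', m = m' + 1 := ⟨m - 1, by omega⟩
          rw [pow_succ, Module.End.mul_apply, hfv, map_zero]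
        have : v ∈ Km ⊓ W := ⟨hvK, hvW⟩
        rw [hcompl.inf_eq_bot] at this
        simpa using this
      have hfWbij : Function.Bijective fW :=
        ⟨hfWinj, (LinearMap.injective_iff_surjective).mp hfWinj⟩
      have hfWunit : IsUnit fW := (Module.End.isUnit_iff fW).mpr hfWbij
      set u := hfWunit.unit with hu
      set A : Module.End K W := (↑u⁻¹ : Module.End K W) * gW with hA
      have hAfin : (spectrum K A).Finite := A.finite_spectrum
      obtain ⟨c, hc⟩ : ∃ c : K, -c ∉ spectrum K A := by
        have hfin : {c : K | -c ∈ spectrum K A}.Finite :=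
          Set.Finite.preimage (Set.injOn_of_injective neg_injective) hAfin
        obtain ⟨c, hc⟩ := (hfin.infinite_compl).nonempty
        exact ⟨c, hc⟩
      set h : Module.End K V := (g : Module.End K V) + c • f with hh
      have hhF : h ∈ F := F.add_mem g.2 (F.smul_mem c hfF)
      -- W part
      have hcommWfg : Commute fW gW := by
        refine LinearMap.ext fun v => Subtype.ext ?_
        have := congrFun (congrArg (DFunLike.coe) ((hcomm f hfF g g.2).eq)) (v : V)
        simp only [Module.End.mul_apply] at this
        simp [Module.End.mul_apply, hfW, hgW, LinearMap.restrict_apply, this]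
      have hWrestr_eq : h.restrict (hWinv h hhF) = gW + c • fW := by
        refine LinearMap.ext fun v => Subtype.ext ?_
        simp [hh, hfW, hgW, LinearMap.restrict_apply]
      have hunitW : IsUnit (gW + c • fW) := by
        have h1 : IsUnit (A + c • (1 : Module.End K W)) := by
          have h2 : IsUnit ((algebraMap K (Module.End K W)) (-c) - A) :=
            spectrum.notMem_iff.mp hc
          have h3 : (algebraMap K (Module.End K W)) (-c) - A = -(A + c • 1) := by
            rw [Algebra.algebraMap_eq_smul_one]
            module
          rw [h3] at h2
          exact (IsUnit.neg_iff _).mp h2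
        have hfWu : (u : Module.End K W) = fW := hfWunit.unit_spec
        have h4 : fW * (A + c • (1 : Module.End K W)) = gW + c • fW := by
          rw [mul_add, hA, ← mul_assoc, ← hfWu, u.mul_inv, one_mul, mul_smul_comm, mul_one]
        rw [← h4]
        exact hfWunit.mul h1
      have hbijW : Function.Bijective (h.restrict (hWinv h hhF)) := by
        rw [hWrestr_eq]
        exact (Module.End.isUnit_iff _).mp hunitW
      -- Km part
      set fK := f.restrict (hKinv f hfF) with hfK
      have hfKval : ∀ (j : ℕ) (v : Km), ((fK ^ j) v : V) = (f ^ j) (v : V) := by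
        intro j
        induction j with
        | zero =>
          intro v
          rw [pow_zero, pow_zero, Module.End.one_apply, Module.End.one_apply]
        | succ j ihj =>
          intro v
          rw [pow_succ, pow_succ, Module.End.mul_apply, Module.End.mul_apply, ihj (fK v)]
          rfl
      have hfKnil : IsNilpotent fK := by
        refine ⟨m, ?_⟩
        refine LinearMap.ext fun v => Subtype.ext ?_
        rw [hfKval m v]
        have hv0 : (f ^ m) (v : V) = 0 := v.2
        simpa using hv0
      have hgKbij : Function.Bijective (ρ g) := hg ▸ ha'bij
      have hcommKfg : Commute fK (ρ g) := by
        refine LinearMap.ext fun v => Subtype.ext ?_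
        have := congrFun (congrArg (DFunLike.coe) ((hcomm f hfF g g.2).eq)) (v : V)
        simp only [Module.End.mul_apply] at this
        exact this
      have hKrestr_eq : h.restrict (hKinv h hhF) = (ρ g) + c • fK := by
        refine LinearMap.ext fun v => Subtype.ext ?_
        rfl
      have hunitK : IsUnit ((ρ g) + c • fK) := by
        refine IsNilpotent.isUnit_add_left_of_commute (hfKnil.smul c)
          ((Module.End.isUnit_iff _).mpr hgKbij) ?_
        exact (hcommKfg.symm.smul_right c).symm  -- Commute (c • fK) (ρ g)
      have hbijK : Function.Bijective (h.restrict (hKinv h hhF)) := by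
        rw [hKrestr_eq]
        exact (Module.End.isUnit_iff _).mp hunitK
      exact ⟨h, hhF,
        bij_of_isCompl_restrict hcompl h (fun v hv => hKinv h hhF v hv)
          (fun v hv => hWinv h hhF v hv) hbijK hbijW⟩

end KeyLemma
private lemma pow_bracket_eq_zero {k g : Type*} [CommRing k] [LieRing g] [LieAlgebra k g]
    (D : Module.End k g) (hD : ∀ x y : g, D ⁅x, y⁆ = ⁅D x, y⁆ + ⁅x, D y⁆)
    (M : ℕ) (x y : g) (hx : (D ^ M) x = 0) (hy : (D ^ M) y = 0) :
    (D ^ (M + M)) ⁅x, y⁆ = 0 := by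
  have key : ∀ n : ℕ, (D ^ n) ⁅x, y⁆ ∈
      Submodule.span k {z : g | ∃ i j : ℕ, i + j = n ∧ z = ⁅(D ^ i) x, (D ^ j) y⁆} := by
    intro n
    induction n with
    | zero =>
      apply Submodule.subset_span
      exact ⟨0, 0, rfl, by simp⟩
    | succ n ih =>
      rw [pow_succ', Module.End.mul_apply]
      refine Submodule.span_induction
        (p := fun z _ => D z ∈ Submodule.span k
          {z : g | ∃ i j : ℕ, i + j = n + 1 ∧ z = ⁅(D ^ i) x, (D ^ j) y⁆})
        ?_ ?_ ?_ ?_ ih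
      · rintro z ⟨i, j, hij, rfl⟩
        rw [hD]
        refine add_mem (Submodule.subset_span ⟨i + 1, j, by omega, ?_⟩)
          (Submodule.subset_span ⟨i, j + 1, by omega, ?_⟩)
        · rw [pow_succ', Module.End.mul_apply]
        · rw [pow_succ', Module.End.mul_apply]
      · show D (0 : g) ∈ _
        rw [map_zero]; exact zero_mem _
      · intro a b _ _ hA hB
        show D (a + b) ∈ _
        rw [map_add]; exact add_mem hA hB
      · intro c a _ hA
        show D (c • a) ∈ _
        rw [map_smul]; exact Submodule.smul_mem _ c hA
  have hbot : (D ^ (M + M)) ⁅x, y⁆ ∈ (⊥ : Submodule k g) := by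
    refine Submodule.span_le.mpr ?_ (key (M + M))
    rintro z ⟨i, j, hij, rfl⟩
    rcases le_or_gt M i with hi | hi
    · have h5 : i - M + M = i := by omega
      have h6 : (D ^ i) x = 0 := by
        calc (D ^ i) x = (D ^ (i - M + M)) x := by rw [h5]
          _ = (D ^ (i - M)) ((D ^ M) x) := by rw [pow_add, Module.End.mul_apply]
          _ = 0 := by rw [hx, map_zero]
      simp [h6]
    · have hj : M ≤ j := by omega
      have h5 : j - M + M = j := by omega
      have h6 : (D ^ j) y = 0 := by
        calc (D ^ j) y = (D ^ (j - M + M)) y := by rw [h5]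
          _ = (D ^ (j - M)) ((D ^ M) y) := by rw [pow_add, Module.End.mul_apply]
          _ = 0 := by rw [hy, map_zero]
      simp [h6]
  simpa using hbot

/-- For a finite-dimensional two-step solvable Lie algebra `g`, the ideal
`g^∞ = ⋂ i, g^i` is abelian, the quotient `g/g^∞` is nilpotent, and the
extension `0 → g^∞ → g → g/g^∞ → 0` splits. -/
theorem lr_splitting {k g : Type*} [Field k] [CharZero k]
    [LieRing g] [LieAlgebra k g] [FiniteDimensional k g]
    (h2 : ∀ a b c d : g, ⁅⁅a, b⁆, ⁅c, d⁆⁆ = 0) :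
    ∀ I : LieIdeal k g, I = ⨅ i : ℕ, LieModule.lowerCentralSeries k g g i →
      (∀ x ∈ I, ∀ y ∈ I, ⁅x, y⁆ = (0 : g)) ∧
      LieRing.IsNilpotent (g ⧸ I) ∧
      ∃ s : (g ⧸ I) →ₗ⁅k⁆ g, ∀ z : g ⧸ I, LieSubmodule.Quotient.mk' I (s z) = z := by
  intro I hI
  haveI : Infinite k := inferInstance
  have hIle1 : I ≤ LieModule.lowerCentralSeries k g g 1 := hI ▸ iInf_le _ 1
  have hmem_span : ∀ z ∈ LieModule.lowerCentralSeries k g g 1,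
      z ∈ Submodule.span k {m : g | ∃ (x : (⊤ : LieIdeal k g)) (n : (⊤ : LieSubmodule k g g)),
        ⁅(x : g), (n : g)⁆ = m} := by
    intro z hz
    have h1 : LieModule.lowerCentralSeries k g g 1 =
        ⁅(⊤ : LieIdeal k g), (⊤ : LieSubmodule k g g)⁆ := by
      rw [show (1 : ℕ) = 0 + 1 from rfl, LieModule.lowerCentralSeries_succ,
        LieModule.lowerCentralSeries_zero]
    rw [h1] at hz
    rwa [← LieSubmodule.mem_toSubmodule, LieSubmodule.lieIdeal_oper_eq_linear_span] at hz
  have hbb : ∀ x y : g, ∀ a ∈ I, ⁅⁅x, y⁆, a⁆ = (0 : g) := by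
    intro x y a ha
    have hs := hmem_span a (hIle1 ha)
    refine Submodule.span_induction (p := fun m _ => ⁅⁅x, y⁆, m⁆ = (0 : g)) ?_ ?_ ?_ ?_ hs
    · rintro m ⟨⟨u, -⟩, ⟨v, -⟩, rfl⟩; exact h2 x y u v
    · exact lie_zero _
    · intro a b _ _ hA hB; rw [lie_add, hA, hB, add_zero]
    · intro c a _ hA; rw [lie_smul, hA, smul_zero]
  have habelian : ∀ x ∈ I, ∀ y ∈ I, ⁅x, y⁆ = (0 : g) := by
    intro x hx y hy
    have hs := hmem_span x (hIle1 hx)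
    refine Submodule.span_induction (p := fun m _ => ⁅m, y⁆ = (0 : g)) ?_ ?_ ?_ ?_ hs
    · rintro m ⟨⟨u, -⟩, ⟨v, -⟩, rfl⟩; exact hbb u v y hy
    · exact zero_lie _
    · intro a b _ _ hA hB; rw [add_lie, hA, hB, add_zero]
    · intro c a _ hA; rw [smul_lie, hA, smul_zero]
  obtain ⟨N, hN⟩ := Filter.eventually_atTop.mp
    (LieModule.eventually_iInf_lowerCentralSeries_eq (R := k) (L := g) (M := g))
  have hIN : I = LieModule.lowerCentralSeries k g g N := hI.trans (hN N le_rfl)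
  have hnilpQ : LieRing.IsNilpotent (g ⧸ I) := by
    have hmod : LieModule.IsNilpotent g (g ⧸ I) :=
      (LieModule.isNilpotent_quotient_iff k g g I).mpr ⟨N, le_of_eq hIN.symm⟩
    obtain ⟨n, hn⟩ := (LieModule.isNilpotent_iff k g (g ⧸ I)).mp hmod
    refine (LieModule.isNilpotent_iff k (g ⧸ I) (g ⧸ I)).mpr ⟨n, ?_⟩
    rw [← LieSubmodule.toSubmodule_inj, ← coe_lowerCentralSeries_ideal_quot_eq, hn]
    simp
  set P : Submodule k g := LieSubmodule.toSubmodule I with hP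
  have hlie_memP : ∀ x : g, ∀ v ∈ P, ⁅x, v⁆ ∈ P := by
    intro x v hv
    rw [LieSubmodule.mem_toSubmodule] at hv ⊢
    exact I.lie_mem hv
  let U : g →ₗ[k] Module.End k P :=
    { toFun := fun x => ((LieAlgebra.ad k g) x).restrict (fun v hv => hlie_memP x v hv)
      map_add' := by
        intro x y
        refine LinearMap.ext fun v => Subtype.ext ?_
        simp [LinearMap.restrict_apply, LieAlgebra.ad_apply, add_lie]
        rfl
      map_smul' := by
        intro c x
        refine LinearMap.ext fun v => Subtype.ext ?_
        simp [LinearMap.restrict_apply, LieAlgebra.ad_apply, smul_lie]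
        rfl }
  have hUapply : ∀ (x : g) (v : P), ((U x) v : g) = ⁅x, (v : g)⁆ := by
    intro x v
    simp [U, LinearMap.restrict_apply, LieAlgebra.ad_apply]
    rfl
  set F : Submodule k (Module.End k P) := LinearMap.range U with hF
  have hcommF : ∀ f ∈ F, ∀ f' ∈ F, Commute f f' := by
    rintro _ ⟨x, rfl⟩ _ ⟨y, rfl⟩
    refine LinearMap.ext fun v => Subtype.ext ?_
    have hv : (v : g) ∈ I := (LieSubmodule.mem_toSubmodule I).mp v.2
    simp only [Module.End.mul_apply]
    rw [hUapply x (U y v), hUapply y v, hUapply y (U x v), hUapply x v]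
    rw [leibniz_lie x y (v : g), hbb x y _ hv, zero_add]
  have hIsucc : I = LieModule.lowerCentralSeries k g g (N + 1) := hI.trans (hN (N + 1) (Nat.le_succ N))
  have hII : ⁅(⊤ : LieIdeal k g), I⁆ = I := by
    conv_lhs => rw [hIN]
    rw [← LieModule.lowerCentralSeries_succ, ← hIsucc]
  have hspanF : (⨆ f : F, LinearMap.range (f : Module.End k P)) = ⊤ := by
    rw [eq_top_iff]
    rintro a -
    set J := ⨆ f : F, LinearMap.range (f : Module.End k P) with hJ
    have hle : P ≤ Submodule.map P.subtype J := by
      have h1 : P = Submodule.span k {m : g | ∃ (x : (⊤ : LieIdeal k g)) (n : I),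
          ⁅(x : g), (n : g)⁆ = m} := by
        rw [show P = LieSubmodule.toSubmodule ⁅(⊤ : LieIdeal k g), I⁆ from by rw [hII],
          LieSubmodule.lieIdeal_oper_eq_linear_span]
      refine le_trans h1.le (Submodule.span_le.mpr ?_)
      rintro m ⟨x, n, rfl⟩
      have hnP : (n : g) ∈ P := (LieSubmodule.mem_toSubmodule I).mpr n.2
      refine ⟨(U (x : g)) ⟨(n : g), hnP⟩, ?_, ?_⟩
      · exact (le_iSup (fun f : F => LinearMap.range (f : Module.End k P))
          ⟨U (x : g), ⟨(x : g), rfl⟩⟩) ⟨⟨(n : g), hnP⟩, rfl⟩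
      · exact hUapply (x : g) ⟨(n : g), hnP⟩
    obtain ⟨b, hbJ, hba⟩ := hle a.2
    have hba' : b = a := Subtype.ext hba
    exact hba' ▸ hbJ
  obtain ⟨ft, hftF, hftbij⟩ := commute_key (Module.finrank k P) P le_rfl F hcommF hspanF
  obtain ⟨t, rfl⟩ := hftF
  set D : Module.End k g := (LieAlgebra.ad k g) t with hD
  have hpow_val : ∀ (j : ℕ) (a : P), (((U t) ^ j) a : g) = (D ^ j) (a : g) := by
    intro j
    induction j with
    | zero =>
      intro a
      rw [pow_zero, pow_zero, Module.End.one_apply, Module.End.one_apply]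
    | succ j ihj =>
      intro a
      rw [pow_succ, pow_succ, Module.End.mul_apply, Module.End.mul_apply, ihj ((U t) a)]
      exact congrArg (⇑(D ^ j)) (hUapply t a)
  have hrangepow : ∀ j : ℕ, LinearMap.range (D ^ j) ≤
      LieSubmodule.toSubmodule (LieModule.lowerCentralSeries k g g j) := by
    intro j
    induction j with
    | zero =>
      rw [LieModule.lowerCentralSeries_zero, LieSubmodule.top_toSubmodule]
      exact le_top
    | succ j ih =>
      rintro _ ⟨v, rfl⟩
      have hmem : (D ^ j) v ∈ LieModule.lowerCentralSeries k g g j := by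
        rw [← LieSubmodule.mem_toSubmodule]; exact ih ⟨v, rfl⟩
      rw [LieSubmodule.mem_toSubmodule, LieModule.lowerCentralSeries_succ]
      have hstep : (D ^ (j + 1)) v = ⁅t, (D ^ j) v⁆ := by
        rw [pow_succ', Module.End.mul_apply]
        simp [hD, LieAlgebra.ad_apply]
      rw [hstep]
      exact LieSubmodule.lie_mem_lie (LieSubmodule.mem_top _) hmem
  obtain ⟨M, hMcompl, hMker, hMN⟩ : ∃ M, IsCompl (LinearMap.ker (D ^ M)) (LinearMap.range (D ^ M)) ∧
      (⨆ j, LinearMap.ker (D ^ j)) = LinearMap.ker (D ^ M) ∧ N ≤ M := by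
    obtain ⟨M, hM⟩ := ((D.eventually_isCompl_ker_pow_range_pow).and
      ((D.eventually_iSup_ker_pow_eq).and (Filter.eventually_ge_atTop N))).exists
    exact ⟨M, hM.1, hM.2.1, hM.2.2⟩
  have hrange_eq : LinearMap.range (D ^ M) = P := by
    apply le_antisymm
    · refine le_trans (hrangepow M) ?_
      have hle2 : LieModule.lowerCentralSeries k g g M ≤ LieModule.lowerCentralSeries k g g N :=
        LieModule.antitone_lowerCentralSeries k g g hMN
      intro x hx
      rw [LieSubmodule.mem_toSubmodule] at hx
      rw [hP, LieSubmodule.mem_toSubmodule, hIN]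
      exact hle2 hx
    · intro a haP
      have hUt : IsUnit (U t) := (Module.End.isUnit_iff _).mpr hftbij
      have hUtM : Function.Bijective ((U t) ^ M) := (Module.End.isUnit_iff _).mp (hUt.pow M)
      obtain ⟨b, hb⟩ := hUtM.2 ⟨a, haP⟩
      refine ⟨(b : g), ?_⟩
      rw [← hpow_val M b, hb]
  have hkerlie : ∀ x y : g, x ∈ LinearMap.ker (D ^ M) → y ∈ LinearMap.ker (D ^ M) →
      ⁅x, y⁆ ∈ LinearMap.ker (D ^ M) := by
    intro x y hx hy
    have hleib : ∀ u v : g, D ⁅u, v⁆ = ⁅D u, v⁆ + ⁅u, D v⁆ := by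
      intro u v
      simp only [hD, LieAlgebra.ad_apply]
      rw [leibniz_lie]
    rw [LinearMap.mem_ker] at hx hy
    have h0 : (D ^ (M + M)) ⁅x, y⁆ = 0 := pow_bracket_eq_zero D hleib M x y hx hy
    have hmem : ⁅x, y⁆ ∈ ⨆ j, LinearMap.ker (D ^ j) :=
      (le_iSup (fun j => LinearMap.ker (D ^ j)) (M + M)) (LinearMap.mem_ker.mpr h0)
    rwa [hMker] at hmem
  let H : LieSubalgebra k g := { LinearMap.ker (D ^ M) with
    lie_mem' := fun {x y} hx hy => hkerlie x y hx hy }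
  have hcompl' : IsCompl (LinearMap.ker (D ^ M)) P := hrange_eq ▸ hMcompl
  let φ : H →ₗ⁅k⁆ (g ⧸ I) :=
    { toFun := fun x => LieSubmodule.Quotient.mk' I (x : g)
      map_add' := by
        intro x y
        exact map_add (LieSubmodule.Quotient.mk' I) (x : g) (y : g)
      map_smul' := by
        intro c x
        exact map_smul (LieSubmodule.Quotient.mk' I) c (x : g)
      map_lie' := by
        intro x y
        exact (LieSubmodule.Quotient.mk_bracket I (x : g) (y : g)) }
  have hφbij : Function.Bijective φ := by
    constructor
    · intro x y hxy
      have h0 : LieSubmodule.Quotient.mk' I ((x : g) - (y : g)) = 0 := by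
        rw [map_sub, sub_eq_zero]; exact hxy
      have hmem : (x : g) - (y : g) ∈ I := (LieSubmodule.Quotient.mk_eq_zero I).mp h0
      have hmemP : (x : g) - (y : g) ∈ P := (LieSubmodule.mem_toSubmodule I).mpr hmem
      have hmemK : (x : g) - (y : g) ∈ LinearMap.ker (D ^ M) := sub_mem x.2 y.2
      have hbot : (x : g) - (y : g) ∈ LinearMap.ker (D ^ M) ⊓ P := ⟨hmemK, hmemP⟩
      rw [hcompl'.inf_eq_bot, Submodule.mem_bot] at hbot
      exact Subtype.ext (sub_eq_zero.mp hbot)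
    · intro z
      obtain ⟨v, rfl⟩ := LieSubmodule.Quotient.surjective_mk' I z
      obtain ⟨a, b, hab, -⟩ := Submodule.existsUnique_add_of_isCompl hcompl' v
      refine ⟨⟨(a : g), a.2⟩, ?_⟩
      have hbI : (b : g) ∈ I := (LieSubmodule.mem_toSubmodule I).mp b.2
      have hb0 : LieSubmodule.Quotient.mk' I (b : g) = 0 :=
        (LieSubmodule.Quotient.mk_eq_zero I).mpr hbI
      show LieSubmodule.Quotient.mk' I (a : g) = LieSubmodule.Quotient.mk' I v
      calc LieSubmodule.Quotient.mk' I (a : g)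
          = LieSubmodule.Quotient.mk' I ((a : g) + (b : g)) := by
            rw [map_add, hb0, add_zero]
        _ = LieSubmodule.Quotient.mk' I v := by rw [hab]
  let e := LieEquiv.ofBijective φ hφbij
  refine ⟨habelian, hnilpQ, H.incl.comp e.symm.toLieHom, fun z => ?_⟩
  have h1 : LieSubmodule.Quotient.mk' I ((H.incl.comp e.symm.toLieHom) z) = e (e.symm z) := rfl
  rw [h1, e.apply_symm_apply]
end

section
/- Let g be a finite-dimensional Lie algebra over a field of characteristic zero. If g admits an LR-structure, then g admits a complete LR-structure. -/
namespace LRCompleteAux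

open Polynomial

variable {k g : Type*} [Field k] [AddCommGroup g] [Module k g]

/-- The span of all products. -/
def prodSpan (mul : g →ₗ[k] g →ₗ[k] g) : Submodule k g :=
  Submodule.span k {z : g | ∃ a b : g, mul a b = z}

/-- A "good" operator: it moves onto the left factor of any product, and
its range lies in the span of products. -/
def IsGood (mul : g →ₗ[k] g →ₗ[k] g) (Q : Module.End k g) : Prop :=
  (∀ a b : g, Q (mul a b) = mul (Q a) b) ∧ ∀ v : g, Q v ∈ prodSpan mul

variable {mul : g →ₗ[k] g →ₗ[k] g}

theorem good_zero : IsGood mul 0 := by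
  constructor
  · intro a b; simp
  · intro v; simp [Submodule.zero_mem]

theorem good_add {A B : Module.End k g} (hA : IsGood mul A) (hB : IsGood mul B) :
    IsGood mul (A + B) := by
  constructor
  · intro a b
    simp [LinearMap.add_apply, hA.1, hB.1, map_add]
  · intro v
    exact Submodule.add_mem _ (hA.2 v) (hB.2 v)

theorem good_smul {A : Module.End k g} (c : k) (hA : IsGood mul A) :
    IsGood mul (c • A) := by
  constructor
  · intro a b
    simp [LinearMap.smul_apply, hA.1, map_smul]
  · intro v
    exact Submodule.smul_mem _ _ (hA.2 v)

theorem good_sub {A B : Module.End k g} (hA : IsGood mul A) (hB : IsGood mul B) :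
    IsGood mul (A - B) := by
  constructor
  · intro a b
    simp [LinearMap.sub_apply, hA.1, hB.1, map_sub]
  · intro v
    exact Submodule.sub_mem _ (hA.2 v) (hB.2 v)

theorem good_maps_span {A : Module.End k g} (hA : IsGood mul A) {v : g}
    (hv : v ∈ prodSpan mul) : A v ∈ prodSpan mul := by
  induction hv using Submodule.span_induction with
  | mem z hz =>
      obtain ⟨a, b, rfl⟩ := hz
      rw [hA.1]
      exact Submodule.subset_span ⟨A a, b, rfl⟩
  | zero => simp [Submodule.zero_mem]
  | add x y hx hy ihx ihy => rw [map_add]; exact Submodule.add_mem _ ihx ihy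
  | smul c x hx ihx => rw [map_smul]; exact Submodule.smul_mem _ _ ihx

theorem good_mul {A B : Module.End k g} (hA : IsGood mul A) (hB : IsGood mul B) :
    IsGood mul (A * B) := by
  constructor
  · intro a b
    simp only [Module.End.mul_apply, hB.1, hA.1]
  · intro v
    exact good_maps_span hA (hB.2 v)

theorem good_pow {A : Module.End k g} (hA : IsGood mul A) :
    ∀ n : ℕ, IsGood mul (A ^ (n + 1)) := by
  intro n
  induction n with
  | zero => simpa using hA
  | succ m ih =>
      rw [pow_succ]
      exact good_mul ih hA

theorem good_aeval {A : Module.End k g} (hA : IsGood mul A) (f : k[X])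
    (hf : f.coeff 0 = 0) : IsGood mul (aeval A f) := by
  rw [aeval_eq_sum_range]
  apply Finset.sum_induction _ (IsGood mul) (fun a b ha hb => good_add ha hb) good_zero
  intro i _
  rcases i with _ | m
  · simpa [hf] using good_zero
  · exact good_smul _ (good_pow hA m)

section WithHR

variable (hR : ∀ x y z : g, mul (mul x y) z = mul (mul x z) y)
include hR

theorem good_R (y : g) : IsGood mul (mul.flip y) := by
  constructor
  · intro a b
    simp only [LinearMap.flip_apply]
    exact hR a b y
  · intro v
    exact Submodule.subset_span ⟨v, y, rfl⟩

end WithHR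

theorem good_commute_R {Q : Module.End k g} (hQ : IsGood mul Q) (y : g) :
    Commute (mul.flip y) Q := by
  show _ = _
  ext v
  simp only [Module.End.mul_apply, LinearMap.flip_apply]
  exact (hQ.1 v y).symm

theorem idem_pow {R : Type*} [Monoid R] {e : R} (he : e * e = e) (n : ℕ) :
    e ^ (n + 1) = e := by
  induction n with
  | zero => rw [pow_one]
  | succ m ih => rw [pow_succ, ih, he]

theorem commute_aeval (T : Module.End k g) (q : k[X]) : Commute T (aeval T q) := by
  have h4 : aeval T ((X : k[X]) * q) = aeval T (q * (X : k[X])) := by rw [mul_comm]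
  rw [map_mul, map_mul, Polynomial.aeval_X] at h4
  exact h4

/-- Fitting idempotent of an endomorphism, as a polynomial in it with zero
constant term. -/
theorem fitting [FiniteDimensional k g] (T : Module.End k g) :
    ∃ E : Module.End k g,
      (∃ f : k[X], f.coeff 0 = 0 ∧ aeval T f = E) ∧ E * E = E ∧
        IsNilpotent (T * (1 - E)) := by
  have hint : IsIntegral k T := IsIntegral.of_finite k T
  set μ : k[X] := X * minpoly k T with hμ
  have hμ0 : μ ≠ 0 := mul_ne_zero X_ne_zero (minpoly.ne_zero hint)
  have hμT : aeval T μ = 0 := by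
    rw [hμ, map_mul, minpoly.aeval, mul_zero]
  obtain ⟨h, hfact, hndvd⟩ := μ.exists_eq_pow_rootMultiplicity_mul_and_not_dvd hμ0 0
  rw [map_zero, sub_zero] at hfact hndvd
  set b : ℕ := μ.rootMultiplicity 0 with hb
  have hb1 : 1 ≤ b := by
    rw [hb, Polynomial.le_rootMultiplicity_iff hμ0, map_zero, sub_zero, pow_one]
    exact Dvd.intro _ rfl
  have hcop : IsCoprime ((X : k[X]) ^ b) h :=
    (Polynomial.irreducible_X.coprime_iff_not_dvd.mpr hndvd).pow_left
  obtain ⟨u, w, huw⟩ := hcop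
  have hwh : (w * h : k[X]) = 1 - u * X ^ b := by linear_combination huw
  have h1E : (1 : Module.End k g) - aeval T (u * X ^ b) = aeval T (w * h) := by
    rw [hwh, map_sub, map_one]
  have hWH0 : ∀ r : k[X], aeval T (r * μ) = 0 := by
    intro r
    rw [map_mul, hμT, mul_zero]
  refine ⟨aeval T (u * X ^ b), ⟨u * X ^ b, ?_, rfl⟩, ?_, ?_⟩
  · have hdvd : (X : k[X]) ∣ u * X ^ b := Dvd.dvd.mul_left (dvd_pow_self X (by omega)) u
    exact Polynomial.X_dvd_iff.mp hdvd
  · have h2 : aeval T (u * X ^ b) * ((1 : Module.End k g) - aeval T (u * X ^ b)) = 0 := by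
      rw [h1E, ← map_mul]
      have heq : (u * X ^ b) * (w * h) = (u * w) * μ := by rw [hfact]; ring
      rw [heq]
      exact hWH0 _
    have h3 : aeval T (u * X ^ b) * 1 - aeval T (u * X ^ b) * aeval T (u * X ^ b) = 0 := by
      rw [← mul_sub]; exact h2
    rw [mul_one] at h3
    exact (sub_eq_zero.mp h3).symm
  · -- nilpotency: (T * (1-E))^b = 0
    have hcomm : Commute T ((1 : Module.End k g) - aeval T (u * X ^ b)) := by
      rw [h1E]
      exact commute_aeval T _
    have hidem : ((1 : Module.End k g) - aeval T (u * X ^ b)) *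
        ((1 : Module.End k g) - aeval T (u * X ^ b)) =
        (1 : Module.End k g) - aeval T (u * X ^ b) := by
      rw [h1E, ← map_mul]
      have heq : (w * h) * (w * h) = (w * h) - (u * w) * μ := by
        calc (w * h) * (w * h) = (w * h) * (1 - u * X ^ b) := by rw [← hwh]
          _ = (w * h) - (u * w) * (X ^ b * h) := by ring
          _ = (w * h) - (u * w) * μ := by rw [← hfact]
      rw [heq, map_sub, hWH0, sub_zero]
    refine ⟨b, ?_⟩
    rw [hcomm.mul_pow b]
    obtain ⟨m, hm⟩ : ∃ m, b = m + 1 := ⟨b - 1, by omega⟩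
    rw [hm] at hidem h1E ⊢
    rw [idem_pow hidem m, h1E]
    have hTb : T ^ (m + 1) = aeval T ((X : k[X]) ^ (m + 1)) := by
      rw [map_pow, Polynomial.aeval_X]
    rw [hTb, ← map_mul]
    have heq : ((X : k[X]) ^ (m + 1)) * (w * h) = w * μ := by rw [hfact, ← hm]; ring
    rw [heq]
    exact hWH0 _

section Main

variable [FiniteDimensional k g]
variable (hR : ∀ x y z : g, mul (mul x y) z = mul (mul x z) y)
include hR

theorem exists_Q_list (l : List g) :
    ∃ Q : Module.End k g, IsGood mul Q ∧ Q * Q = Q ∧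
      ∀ y ∈ l, IsNilpotent (mul.flip y * (1 - Q)) := by
  induction l with
  | nil => exact ⟨0, good_zero, by simp, by simp⟩
  | cons y l ih =>
      obtain ⟨Q₀, hQ₀good, hQ₀idem, hQ₀nil⟩ := ih
      set T : Module.End k g := mul.flip y * (1 - Q₀) with hT
      have hTgood : IsGood mul T := by
        have hTalt : T = mul.flip y - mul.flip y * Q₀ := by rw [hT, mul_sub, mul_one]
        rw [hTalt]
        exact good_sub (good_R hR y) (good_mul (good_R hR y) hQ₀good)
      obtain ⟨E, ⟨f, hf0, hfE⟩, hEE, hEnil⟩ := fitting T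
      have hEgood : IsGood mul E := hfE ▸ good_aeval hTgood f hf0
      -- orthogonality
      have hQ₀T : Q₀ * T = 0 := by
        rw [hT, ← mul_assoc, ← (good_commute_R hQ₀good y).eq, mul_assoc, mul_sub, mul_one,
          hQ₀idem, sub_self, mul_zero]
      have hTQ₀ : T * Q₀ = 0 := by
        rw [hT, mul_assoc, sub_mul, one_mul, hQ₀idem, sub_self, mul_zero]
      obtain ⟨r, hr⟩ : (X : k[X]) ∣ f := Polynomial.X_dvd_iff.mpr hf0
      have hE_TS : E = T * aeval T r := by
        rw [← hfE, hr, map_mul, Polynomial.aeval_X]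
      have hE_ST : E = aeval T r * T := by
        rw [hE_TS]
        exact commute_aeval T r
      have hEQ₀ : E * Q₀ = 0 := by rw [hE_ST, mul_assoc, hTQ₀, mul_zero]
      have hQ₀E : Q₀ * E = 0 := by rw [hE_TS, ← mul_assoc, hQ₀T, zero_mul]
      refine ⟨Q₀ + E, good_add hQ₀good hEgood, ?_, ?_⟩
      · rw [add_mul, mul_add, mul_add, hQ₀idem, hEE, hQ₀E, hEQ₀]
        abel
      · intro y' hy'
        rcases List.mem_cons.mp hy' with rfl | hy'
        · -- new element
          have hfac : ((1 : Module.End k g) - Q₀) * (1 - E) = 1 - (Q₀ + E) := by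
            rw [mul_sub, mul_one, sub_mul, one_mul, hQ₀E]
            abel
          have key : mul.flip y' * (1 - (Q₀ + E)) = T * (1 - E) := by
            rw [hT, mul_assoc, hfac]
          rw [key]; exact hEnil
        · -- old elements
          have hQQ₀ : (Q₀ + E) * Q₀ = Q₀ := by rw [add_mul, hQ₀idem, hEQ₀, add_zero]
          have hQ₀Q : Q₀ * (Q₀ + E) = Q₀ := by rw [mul_add, hQ₀idem, hQ₀E, add_zero]
          have key : mul.flip y' * (1 - (Q₀ + E)) =
              (mul.flip y' * (1 - Q₀)) * (1 - (Q₀ + E)) := by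
            rw [mul_assoc]
            congr 1
            rw [sub_mul, one_mul, mul_sub, mul_one, hQ₀Q]
            abel
          rw [key]
          have hcQ : Commute Q₀ (Q₀ + E) := by
            show _ = _
            rw [hQ₀Q, hQQ₀]
          have c1 : Commute (mul.flip y') (1 - (Q₀ + E)) :=
            (Commute.one_right _).sub_right (good_commute_R (good_add hQ₀good hEgood) y')
          have c2 : Commute (1 - Q₀) (1 - (Q₀ + E)) :=
            Commute.sub_left (Commute.one_left _)
              ((Commute.one_right Q₀).sub_right hcQ)
          exact Commute.isNilpotent_mul_right (c1.mul_left c2) (hQ₀nil y' hy')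

theorem exists_Q :
    ∃ Q : Module.End k g, IsGood mul Q ∧ Q * Q = Q ∧
      ∀ y : g, IsNilpotent (mul.flip y * (1 - Q)) := by
  obtain ⟨n, s, hs⟩ := Module.Finite.exists_fin (R := k) (M := g)
  obtain ⟨Q, hgood, hidem, hnil⟩ := exists_Q_list hR ((List.finRange n).map s)
  refine ⟨Q, hgood, hidem, ?_⟩
  have hmem : ∀ y : g, y ∈ Submodule.span k (Set.range s) := by
    intro y; rw [hs]; trivial
  intro y
  have hy := hmem y
  induction hy using Submodule.span_induction with
  | mem x hx =>
      obtain ⟨i, rfl⟩ := hx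
      exact hnil (s i) (List.mem_map.mpr ⟨i, List.mem_finRange i, rfl⟩)
  | zero => simp
  | add x z hx hz ihx ihz =>
      rw [map_add, add_mul]
      refine Commute.isNilpotent_add ?_ ihx ihz
      have cRR : Commute (mul.flip x) (mul.flip z) := by
        show _ = _
        ext v
        simp only [Module.End.mul_apply, LinearMap.flip_apply]
        exact hR v z x
      have cRQ : ∀ a : g, Commute (mul.flip a) (1 - Q) :=
        fun a => (Commute.one_right _).sub_right (good_commute_R hgood a)
      have h1 : Commute (mul.flip x) (mul.flip z * (1 - Q)) :=
        cRR.mul_right (cRQ x)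
      have h2 : Commute (1 - Q) (mul.flip z * (1 - Q)) :=
        ((cRQ z).symm).mul_right (Commute.refl _)
      exact h1.mul_left h2
  | smul c x hx ihx =>
      rw [map_smul, smul_mul_assoc]
      obtain ⟨m, hm⟩ := ihx
      exact ⟨m, by rw [_root_.smul_pow, hm, smul_zero]⟩

end Main

end LRCompleteAux

open LRCompleteAux in
/-- A finite-dimensional Lie algebra admitting an LR-structure admits a
complete LR-structure. -/
theorem lr_complete_of_lr {k g : Type*} [Field k] [CharZero k]
    [LieRing g] [LieAlgebra k g] [FiniteDimensional k g]
    (mul : g →ₗ[k] g →ₗ[k] g)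
    (hL : ∀ x y z : g, mul x (mul y z) = mul y (mul x z))
    (hR : ∀ x y z : g, mul (mul x y) z = mul (mul x z) y)
    (hcompat : ∀ x y : g, mul x y - mul y x = ⁅x, y⁆) :
    ∃ mul' : g →ₗ[k] g →ₗ[k] g,
      (∀ x y z : g, mul' x (mul' y z) = mul' y (mul' x z)) ∧
      (∀ x y z : g, mul' (mul' x y) z = mul' (mul' x z) y) ∧
      (∀ x y : g, mul' x y - mul' y x = ⁅x, y⁆) ∧
      (∀ x : g, IsNilpotent (mul'.flip x : Module.End k g)) := by
  classical
  obtain ⟨Q, hgood, hidem, hnil⟩ := exists_Q (mul := mul) hR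
  -- basic facts about Q
  have hQmul : ∀ a b : g, Q (mul a b) = mul (Q a) b := hgood.1
  have hQQ : ∀ v : g, Q (Q v) = Q v := by
    intro v
    have := congrArg (fun F : Module.End k g => F v) hidem
    simpa [Module.End.mul_apply] using this
  -- commutation of products of products (abelian-ness of Q-range)
  have core : ∀ a b c d : g, mul (mul a b) (mul c d) = mul (mul c d) (mul a b) := by
    intro a b c d
    have e1 : mul (mul a b) (mul c d) = mul (mul a (mul c d)) b := hR a b (mul c d)
    have e2 : mul a (mul c d) = mul c (mul a d) := hL a c d
    have e3 : mul (mul c (mul a d)) b = mul (mul c b) (mul a d) := hR c (mul a d) b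
    have f1 : mul (mul c d) (mul a b) = mul a (mul (mul c d) b) := (hL a (mul c d) b).symm
    have f2 : mul (mul c d) b = mul (mul c b) d := hR c d b
    have f3 : mul a (mul (mul c b) d) = mul (mul c b) (mul a d) := hL a (mul c b) d
    rw [e1, e2, e3, f1, f2, f3]
  have spanComm : ∀ u ∈ prodSpan mul, ∀ v ∈ prodSpan mul, mul u v = mul v u := by
    intro u hu v hv
    induction hu, hv using Submodule.span_induction₂ with
    | mem_mem x y hx hy =>
        obtain ⟨a, b, rfl⟩ := hx
        obtain ⟨c, d, rfl⟩ := hy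
        exact core a b c d
    | zero_left y hy => simp
    | zero_right x hx => simp
    | add_left x y z hx hy hz ih1 ih2 => simp only [map_add, LinearMap.add_apply, ih1, ih2]
    | add_right x y z hx hy hz ih1 ih2 => simp only [map_add, LinearMap.add_apply, ih1, ih2]
    | smul_left c x y hx hy ih => simp only [map_smul, LinearMap.smul_apply, ih]
    | smul_right c x y hx hy ih => simp only [map_smul, LinearMap.smul_apply, ih]
  have hQcomm : ∀ x y : g, mul (Q x) (Q y) = mul (Q y) (Q x) := fun x y =>
    spanComm _ (hgood.2 x) _ (hgood.2 y)
  -- the new product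
  obtain ⟨P, hP⟩ : ∃ P' : Module.End k g, P' = 1 - Q := ⟨_, rfl⟩
  have hPapp : ∀ v : g, P v = v - Q v := by
    intro v; simp [hP, LinearMap.sub_apply]
  have hQP : ∀ v : g, Q (P v) = 0 := by
    intro v; rw [hPapp, map_sub, hQQ, sub_self]
  have hmul0 : ∀ y : g, mul (0 : g) y = 0 := fun y => LinearMap.map_zero₂ mul y
  set mul' : g →ₗ[k] g →ₗ[k] g := LinearMap.mk₂ k
      (fun x y => mul (P x) y - Q (mul y (P x)))
      (by intro x₁ x₂ y; simp only [map_add, LinearMap.add_apply]; abel)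
      (by intro c x y; simp only [map_smul, LinearMap.smul_apply, smul_sub])
      (by intro x y₁ y₂; simp only [map_add, LinearMap.add_apply]; abel)
      (by intro c x y; simp only [map_smul, LinearMap.smul_apply, smul_sub])
    with hmul'
  have hm : ∀ x y : g, mul' x y = mul (P x) y - Q (mul y (P x)) := by
    intro x y; rw [hmul']; rfl
  have hm2 : ∀ x y : g, mul' x y = mul (P x) y - mul (Q y) (P x) := by
    intro x y; rw [hm, hQmul]
  have hQmul' : ∀ x y : g, Q (mul' x y) = 0 - mul (Q y) (P x) := by
    intro x y
    rw [hm x y, map_sub, hQmul (P x) y, hQP x, hmul0 y, hQQ, hQmul y (P x)]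
  have hPmul' : ∀ x y : g, P (mul' x y) = mul (P x) y := by
    intro x y
    rw [hPapp, hQmul' x y, hm2 x y]
    abel
  refine ⟨mul', ?_, ?_, ?_, ?_⟩
  · -- left commutativity
    intro x y z
    have key : ∀ a b : g, mul' a (mul' b z) =
        mul (P a) (mul (P b) z) + mul (mul (Q z) (P b)) (P a) := by
      intro a b
      have step2 : Q (mul (mul' b z) (P a)) = 0 - mul (Q (mul z (P b))) (P a) := by
        rw [hm b z, LinearMap.map_sub₂, map_sub, hQmul (mul (P b) z) (P a),
          hQmul (P b) z, hQP b, hmul0 z, hmul0 (P a), hQmul (Q (mul z (P b))) (P a), hQQ]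
      have step3 : mul (P a) (mul' b z) =
          mul (P a) (mul (P b) z) - mul (P a) (Q (mul z (P b))) := by
        rw [hm b z, map_sub]
      have step4 : mul (P a) (Q (mul z (P b))) = 0 := by
        calc mul (P a) (Q (mul z (P b))) = mul (P a) (mul (Q z) (P b)) := by
              rw [hQmul z (P b)]
          _ = mul (Q z) (mul (P a) (P b)) := hL (P a) (Q z) (P b)
          _ = Q (mul z (mul (P a) (P b))) := (hQmul z _).symm
          _ = Q (mul (P a) (mul z (P b))) := by rw [hL z (P a) (P b)]
          _ = mul (Q (P a)) (mul z (P b)) := hQmul _ _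
          _ = 0 := by rw [hQP a, hmul0]
      calc mul' a (mul' b z)
          = mul (P a) (mul' b z) - Q (mul (mul' b z) (P a)) := hm a _
        _ = (mul (P a) (mul (P b) z) - mul (P a) (Q (mul z (P b))))
              - (0 - mul (Q (mul z (P b))) (P a)) := by rw [step3, step2]
        _ = mul (P a) (mul (P b) z) + mul (mul (Q z) (P b)) (P a) := by
              rw [step4, hQmul z (P b)]; abel
    rw [key x y, key y x, hL (P x) (P y) z, hR (Q z) (P y) (P x)]
  · -- right commutativity
    intro x y z
    have key2 : ∀ b c : g, mul' (mul' x b) c = mul (mul (P x) b) c := by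
      intro b c
      have hQz : Q (mul c (P (mul' x b))) = 0 := by
        rw [hPmul' x b, hL c (P x) b, hQmul (P x) (mul c b), hQP x, hmul0]
      rw [hm (mul' x b) c, hQz, sub_zero, hPmul' x b]
    rw [key2 y z, key2 z y, hR (P x) y z]
  · -- compatibility with the bracket
    intro x y
    have e : mul' x y - mul' y x =
        (mul x y - mul y x) + (mul (Q y) (Q x) - mul (Q x) (Q y)) := by
      simp only [hm2, hPapp, map_sub, LinearMap.sub_apply, LinearMap.map_sub₂]
      abel
    rw [e, hQcomm y x, sub_self, add_zero, hcompat]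
  · -- completeness
    intro x
    obtain ⟨A, hA⟩ : ∃ A' : Module.End k g, A' = mul.flip x := ⟨_, rfl⟩
    obtain ⟨B, hB⟩ : ∃ B' : Module.End k g, B' = mul (Q x) := ⟨_, rfl⟩
    have flip_eq : mul'.flip x = (A - B) * P := by
      ext v
      simp only [LinearMap.flip_apply, Module.End.mul_apply, LinearMap.sub_apply, hA, hB]
      exact hm2 v x
    have hPA : P * A = A * P := by
      ext v
      simp only [Module.End.mul_apply, hA, LinearMap.flip_apply, hPapp, hQmul,
        LinearMap.map_sub₂]
    have hPB : P * B = 0 := by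
      ext v
      simp only [Module.End.mul_apply, hB, LinearMap.zero_apply, hPapp, hQmul, hQQ, sub_self]
    have hPP : P * P = P := by
      rw [hP, mul_sub, mul_one, sub_mul, one_mul, hidem]
      abel
    have hstep : P * ((A - B) * P) = A * P := by
      rw [← mul_assoc, mul_sub, hPA, hPB, sub_zero, mul_assoc, hPP]
    have hAPP : (A * P) * P = A * P := by rw [mul_assoc, hPP]
    have key : ∀ m : ℕ, ((A - B) * P) ^ (m + 1) = (A - B) * ((A * P) ^ m * P) := by
      intro m
      induction m with
      | zero => rw [pow_one, pow_zero, one_mul]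
      | succ n ih =>
          rw [pow_succ, ih]
          calc (A - B) * ((A * P) ^ n * P) * ((A - B) * P)
              = (A - B) * ((A * P) ^ n * (P * ((A - B) * P))) := by
                rw [mul_assoc, mul_assoc]
            _ = (A - B) * ((A * P) ^ n * (A * P)) := by rw [hstep]
            _ = (A - B) * ((A * P) ^ (n + 1) * P) := by
                rw [pow_succ, mul_assoc, hAPP]
    obtain ⟨n, hn⟩ := hnil x
    have hAP : A * P = mul.flip x * (1 - Q) := by rw [hA, hP]
    refine ⟨n + 1, ?_⟩
    rw [flip_eq, key n, hAP, hn, zero_mul, mul_zero]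
end

section
/- Let g be a finite-dimensional two-step solvable Lie algebra over a field of characteristic zero and set n = g/g^∞. If n admits an LR-structure with n·n ⊆ [n,n], then g admits an LR-structure (given on g = g^∞ ⋊ n by (a,x)⋆(b,y) = ([x,b], x·y)). -/
open Finset

section core

variable {k n M : Type*} [Field k] [LieRing n] [LieAlgebra k n]
  [AddCommGroup M] [Module k M]

theorem cocycle_integrate
    (ρ : n →ₗ[k] Module.End k M)
    (hρ0 : ∀ x y : n, ρ ⁅x, y⁆ = 0)
    {ι : Type} [Fintype ι] (us : ι → n) (Fs : ι → Module.End k M)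
    (hcomm : ∀ j (x : n), Fs j * ρ x = ρ x * Fs j)
    (hid : ∀ m : M, ∑ j, Fs j ((ρ (us j)) m) = m)
    (N : ℕ) (hnil : LieModule.lowerCentralSeries k n n N = ⊥)
    (ω : n →ₗ[k] n →ₗ[k] M) (halt : ∀ x, ω x x = 0)
    (hco : ∀ x y z, ρ x (ω y z) - ρ y (ω x z) + ρ z (ω x y)
        - ω ⁅x, y⁆ z + ω ⁅x, z⁆ y - ω ⁅y, z⁆ x = 0) :
    ∃ φ : n →ₗ[k] M, ∀ x y, ω x y = ρ x (φ y) - ρ y (φ x) - φ ⁅x, y⁆ := by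
  classical
  have hcomm' : ∀ j (x : n) (m : M), Fs j (ρ x m) = ρ x (Fs j m) := by
    intro j x m
    have := congrArg (fun (T : Module.End k M) => T m) (hcomm j x)
    simpa [Module.End.mul_apply] using this
  let A : n → (n →ₗ[k] n →ₗ[k] M) → (n →ₗ[k] n →ₗ[k] M) := fun u c =>
    c.comp ((LieAlgebra.ad k n) u) + c.compl₂ ((LieAlgebra.ad k n) u)
  let R : (n →ₗ[k] n →ₗ[k] M) → (n →ₗ[k] n →ₗ[k] M) := fun c =>
    ∑ j, ((A (us j) c).compr₂ (Fs j))
  let h : (n →ₗ[k] n →ₗ[k] M) → (n →ₗ[k] M) := fun c => ∑ j, (Fs j) ∘ₗ (c (us j))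
  let dv : (n →ₗ[k] n →ₗ[k] M) → n → n → n → M := fun c x y z =>
    ρ x (c y z) - ρ y (c x z) + ρ z (c x y)
      - c ⁅x, y⁆ z + c ⁅x, z⁆ y - c ⁅y, z⁆ x
  have hA : ∀ u c x y, A u c x y = c ⁅u, x⁆ y + c x ⁅u, y⁆ := by
    intro u c x y
    simp [A, LieAlgebra.ad_apply, LinearMap.add_apply, LinearMap.comp_apply,
      LinearMap.compl₂_apply]
  have hR : ∀ c x y, R c x y = ∑ j, Fs j (c ⁅us j, x⁆ y + c x ⁅us j, y⁆) := by
    intro c x y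
    simp only [R, LinearMap.sum_apply, LinearMap.compr₂_apply, hA]
  have hh : ∀ c x, h c x = ∑ j, Fs j (c (us j) x) := by
    intro c x; simp only [h, LinearMap.sum_apply, LinearMap.comp_apply]
  have antisym : ∀ c : n →ₗ[k] n →ₗ[k] M, (∀ x, c x x = 0) →
      ∀ x y, c x y = - c y x := by
    intro c hc x y
    have h2 := hc (x + y)
    simp only [map_add, LinearMap.add_apply, hc x, hc y, add_zero, zero_add] at h2
    rw [eq_neg_iff_add_eq_zero, add_comm]
    exact h2
  -- key identity 2 : d(A u c) = sum of shifted d c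
  have key2 : ∀ (u : n) c (x y z : n),
      dv (A u c) x y z = dv c ⁅u, x⁆ y z + dv c x ⁅u, y⁆ z + dv c x y ⁅u, z⁆ := by
    intro u c x y z
    simp only [dv, hA, hρ0, LinearMap.zero_apply, lie_lie, map_sub, map_add,
      LinearMap.sub_apply, LinearMap.add_apply, zero_sub, sub_zero, zero_add, add_zero]
    abel
  -- key identity 1
  have key1 : ∀ c, (∀ x, c x x = 0) → ∀ x y,
      ρ x (h c y) - ρ y (h c x) - h c ⁅x, y⁆
        = c x y - R c x y - ∑ j, Fs j (dv c (us j) x y) := by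
    intro c hc x y
    have ha := antisym c hc
    rw [hh, hh, hh, hR]
    conv_rhs => rw [← hid (c x y)]
    simp only [map_sum]
    simp only [← Finset.sum_sub_distrib]
    refine Finset.sum_congr rfl fun j _ => ?_
    rw [← hcomm' j x, ← hcomm' j y]
    simp only [← map_sub]
    congr 1
    simp only [dv]
    rw [ha ⁅us j, y⁆ x, ha ⁅x, y⁆ (us j)]
    abel
  -- R preserves alternating
  have hRalt : ∀ c, (∀ x, c x x = 0) → (∀ x, R c x x = 0) := by
    intro c hc x
    rw [hR]
    refine Finset.sum_eq_zero fun j _ => ?_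
    rw [antisym c hc ⁅us j, x⁆ x]
    simp
  -- R preserves cocycles
  have hRco : ∀ c, (∀ x y z, dv c x y z = 0) → (∀ x y z, dv (R c) x y z = 0) := by
    intro c hc x y z
    have expand : dv (R c) x y z = ∑ j, Fs j (dv (A (us j) c) x y z) := by
      simp only [dv]
      simp only [hR]
      simp only [map_sum]
      simp only [← Finset.sum_sub_distrib, ← Finset.sum_add_distrib]
      refine Finset.sum_congr rfl fun j _ => ?_
      rw [← hcomm' j x, ← hcomm' j y, ← hcomm' j z]
      simp only [← map_sub, ← map_add]
      try congr 1
      try simp only [hA]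
      try abel
    rw [expand]
    refine Finset.sum_eq_zero fun j _ => ?_
    rw [key2, hc, hc, hc]
    simp
  -- iterates
  have hiter : ∀ m, (∀ x, (R^[m] ω) x x = 0) ∧ (∀ x y z, dv (R^[m] ω) x y z = 0) := by
    intro m
    induction m with
    | zero => exact ⟨halt, hco⟩
    | succ m ih =>
      rw [Function.iterate_succ_apply']
      exact ⟨hRalt _ ih.1, hRco _ ih.2⟩
  -- vanishing of high iterates
  have hmem_succ : ∀ (u x : n) (p : ℕ), x ∈ LieModule.lowerCentralSeries k n n p →
      ⁅u, x⁆ ∈ LieModule.lowerCentralSeries k n n (p + 1) := by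
    intro u x p hx
    rw [LieModule.lowerCentralSeries_succ]
    exact LieSubmodule.lie_mem_lie (LieSubmodule.mem_top u) hx
  have hvan : ∀ m (c : n →ₗ[k] n →ₗ[k] M),
      (∀ p q (x y : n), x ∈ LieModule.lowerCentralSeries k n n p →
        y ∈ LieModule.lowerCentralSeries k n n q → N + N ≤ p + q + m → c x y = 0) →
      ∀ p q (x y : n), x ∈ LieModule.lowerCentralSeries k n n p →
        y ∈ LieModule.lowerCentralSeries k n n q → N + N ≤ p + q + (m + 1) →
        R c x y = 0 := by
    intro m c hcv p q x y hx hy harith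
    rw [hR]
    refine Finset.sum_eq_zero fun j _ => ?_
    rw [hcv (p+1) q _ y (hmem_succ _ _ _ hx) hy (by omega),
      hcv p (q+1) x _ hx (hmem_succ _ _ _ hy) (by omega)]
    simp
  have hvanish : ∀ x y, (R^[N + N] ω) x y = 0 := by
    have main : ∀ m, ∀ p q (x y : n), x ∈ LieModule.lowerCentralSeries k n n p →
        y ∈ LieModule.lowerCentralSeries k n n q → N + N ≤ p + q + m →
        (R^[m] ω) x y = 0 := by
      intro m
      induction m with
      | zero =>
        intro p q x y hx hy harith
        rcases (by omega : N ≤ p ∨ N ≤ q) with hp | hq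
        · have : x ∈ LieModule.lowerCentralSeries k n n N :=
            LieModule.antitone_lowerCentralSeries k n n hp hx
          rw [hnil] at this
          rw [LieSubmodule.mem_bot] at this
          rw [this]
          simp
        · have : y ∈ LieModule.lowerCentralSeries k n n N :=
            LieModule.antitone_lowerCentralSeries k n n hq hy
          rw [hnil] at this
          rw [LieSubmodule.mem_bot] at this
          rw [this]
          simp
      | succ m ih =>
        intro p q x y hx hy harith
        rw [Function.iterate_succ_apply']
        exact hvan m _ (fun p q x y hx hy h => ih p q x y hx hy h) p q x y hx hy harith
    intro x y
    exact main (N + N) 0 0 x y (LieSubmodule.mem_top x) (LieSubmodule.mem_top y) (by omega)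
  -- telescoping
  refine ⟨∑ m ∈ Finset.range (N + N), h (R^[m] ω), fun x y => ?_⟩
  have expand : ∀ x, (∑ m ∈ Finset.range (N + N), h (R^[m] ω)) x
      = ∑ m ∈ Finset.range (N + N), (h (R^[m] ω)) x := by
    intro x; rw [LinearMap.sum_apply]
  rw [expand, expand, expand, map_sum, map_sum]
  simp only [← Finset.sum_sub_distrib]
  have step : ∀ m, ρ x ((h (R^[m] ω)) y) - ρ y ((h (R^[m] ω)) x) - (h (R^[m] ω)) ⁅x, y⁆
      = (R^[m] ω) x y - (R^[m+1] ω) x y := by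
    intro m
    rw [key1 _ (hiter m).1 x y]
    have : ∑ j, Fs j (dv (R^[m] ω) (us j) x y) = 0 := by
      refine Finset.sum_eq_zero fun j _ => ?_
      rw [(hiter m).2]
      simp
    rw [this, Function.iterate_succ_apply']
    abel
  rw [Finset.sum_congr rfl (fun m _ => step m), Finset.sum_range_sub']
  rw [Function.iterate_zero_apply, hvanish x y]
  abel

end core

set_option maxHeartbeats 1600000 in
set_option synthInstance.maxHeartbeats 400000 in
/-- If `n = g/g^∞` of a finite-dimensional two-step solvable Lie algebra `g`
admits an LR-structure with `n·n ⊆ [n,n]`, then `g` admits an LR-structure. -/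
theorem lr_lifting {k g : Type*} [Field k] [CharZero k]
    [LieRing g] [LieAlgebra k g] [FiniteDimensional k g]
    (h2 : ∀ a b c d : g, ⁅⁅a, b⁆, ⁅c, d⁆⁆ = 0)
    (I : LieIdeal k g) (hI : I = ⨅ i : ℕ, LieModule.lowerCentralSeries k g g i)
    (mul : (g ⧸ I) →ₗ[k] (g ⧸ I) →ₗ[k] (g ⧸ I))
    (hL : ∀ x y z : g ⧸ I, mul x (mul y z) = mul y (mul x z))
    (hR : ∀ x y z : g ⧸ I, mul (mul x y) z = mul (mul x z) y)
    (hcompat : ∀ x y : g ⧸ I, mul x y - mul y x = ⁅x, y⁆)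
    (hsub : ∀ x y : g ⧸ I, mul x y ∈
      Submodule.span k {z : g ⧸ I | ∃ a b : g ⧸ I, z = ⁅a, b⁆}) :
    ∃ mul' : g →ₗ[k] g →ₗ[k] g,
      (∀ x y z : g, mul' x (mul' y z) = mul' y (mul' x z)) ∧
      (∀ x y z : g, mul' (mul' x y) z = mul' (mul' x z) y) ∧
      (∀ x y : g, mul' x y - mul' y x = ⁅x, y⁆) := by
  classical
  -- the derived ideal
  set D : LieIdeal k g := LieModule.lowerCentralSeries k g g 1 with hDdef
  have hDtop : D = ⁅(⊤ : LieIdeal k g), (⊤ : LieSubmodule k g g)⁆ := by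
    rw [hDdef, LieModule.lowerCentralSeries_succ, LieModule.lowerCentralSeries_zero]
  have hDbr : ∀ u v : g, ⁅u, v⁆ ∈ D := by
    intro u v
    rw [hDtop]
    exact LieSubmodule.lie_mem_lie (LieSubmodule.mem_top u) (LieSubmodule.mem_top v)
  have hspan : ∀ a : g, a ∈ D → a ∈ Submodule.span k
      { m : g | ∃ x ∈ (⊤ : LieIdeal k g), ∃ n ∈ (⊤ : LieSubmodule k g g), ⁅x, n⁆ = m } := by
    intro a ha
    rw [hDtop] at ha
    rw [← LieSubmodule.lieIdeal_oper_eq_linear_span']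
    exact (LieSubmodule.mem_toSubmodule _).mpr ha
  have hDD : ∀ a b : g, a ∈ D → b ∈ D → ⁅a, b⁆ = 0 := by
    intro a b ha hb
    have ha' := hspan a ha
    have hb' := hspan b hb
    clear ha hb
    induction ha' using Submodule.span_induction with
    | mem x hx =>
      obtain ⟨x1, -, x2, -, rfl⟩ := hx
      induction hb' using Submodule.span_induction with
      | mem yy hy =>
        obtain ⟨y1, -, y2, -, rfl⟩ := hy
        exact h2 x1 x2 y1 y2
      | zero => simp
      | add y z _ _ hy hz => rw [lie_add, hy, hz, add_zero]
      | smul t y _ hy => rw [lie_smul, hy, smul_zero]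
    | zero => simp
    | add x y _ _ hx hy => rw [add_lie, hx, hy, add_zero]
    | smul t x _ hx => rw [smul_lie, hx, smul_zero]
  -- stabilization of the lower central series
  obtain ⟨N, hN⟩ : ∃ N, ∀ m, N ≤ m →
      LieModule.lowerCentralSeries k g g N = LieModule.lowerCentralSeries k g g m := by
    have := IsArtinian.monotone_stabilizes (R := k) (M := g)
      ⟨fun i => (LieModule.lowerCentralSeries k g g i : Submodule k g),
        fun i j hij => (LieSubmodule.toSubmodule_le_toSubmodule _ _).mpr
          (LieModule.antitone_lowerCentralSeries k g g hij)⟩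
    obtain ⟨N, hN⟩ := this
    exact ⟨N, fun m hm => by
      have := hN m hm
      exact (LieSubmodule.toSubmodule_inj _ _).mp this⟩
  have hIN : I = LieModule.lowerCentralSeries k g g N := by
    rw [hI]
    refine le_antisymm (iInf_le _ N) (le_iInf fun i => ?_)
    rcases le_total i N with hiN | hNi
    · exact LieModule.antitone_lowerCentralSeries k g g hiN
    · exact le_of_eq (hN i hNi)
  have hID : I ≤ D := by
    rw [hI, hDdef]; exact iInf_le _ 1
  have hII : ⁅(⊤ : LieIdeal k g), I⁆ = I := by
    conv_lhs => rw [hIN]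
    rw [← LieModule.lowerCentralSeries_succ]
    rw [hIN]
    exact (hN (N+1) (by omega)).symm
  -- quotient projection as a Lie algebra morphism
  let πh : g →ₗ⁅k⁆ g ⧸ I :=
    { toLinearMap := (I : Submodule k g).mkQ
      map_lie' := rfl }
  have hπapp : ∀ u : g, πh u = LieSubmodule.Quotient.mk' I u := fun u => rfl
  have hπsurj : Function.Surjective πh := Submodule.mkQ_surjective _
  have hπker : ∀ u : g, πh u = 0 ↔ u ∈ I := by
    intro u
    rw [hπapp]
    exact LieSubmodule.Quotient.mk_eq_zero I
  have hπbr : ∀ u v : g, πh ⁅u, v⁆ = ⁅πh u, πh v⁆ := fun u v => πh.map_lie u v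
  -- a linear section
  obtain ⟨s₀, hs₀⟩ : ∃ s₀ : (g ⧸ I) →ₗ[k] g, ∀ x : g ⧸ I, πh.toLinearMap (s₀ x) = x := by
    obtain ⟨s₀, hs₀⟩ := (πh.toLinearMap).exists_rightInverse_of_surjective
      (LinearMap.range_eq_top.mpr hπsurj)
    exact ⟨s₀, fun x => congrArg (fun f => f x) hs₀⟩
  -- nilpotency of the quotient
  have hnilq : LieModule.lowerCentralSeries k (g ⧸ I) (g ⧸ I) N = ⊥ := by
    rw [← LieIdeal.lowerCentralSeries_map_eq (f := πh) N hπsurj]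
    rw [← hIN]
    rw [LieIdeal.map_eq_bot_iff]
    intro x hx
    rw [LieHom.mem_ker]
    exact (hπker x).mpr hx
  -- the restricted adjoint action on I
  let T : g →ₗ[k] Module.End k ↥I := LinearMap.mk₂ k
    (fun u (i : ↥I) => (⟨⁅u, (i : g)⁆, I.lie_mem i.2⟩ : ↥I))
    (fun u₁ u₂ i => by apply Subtype.ext; simp [add_lie])
    (fun c u i => by apply Subtype.ext; simp [smul_lie])
    (fun u i₁ i₂ => by apply Subtype.ext; simp [lie_add])
    (fun c u i => by apply Subtype.ext; simp [lie_smul])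
  have hTapp : ∀ (u : g) (i : ↥I), ((T u i : ↥I) : g) = ⁅u, (i : g)⁆ := fun u i => rfl
  have hT0 : ∀ u : g, u ∈ D → T u = 0 := by
    intro u hu
    ext i
    show ((T u i : ↥I) : g) = ((0 : Module.End k ↥I) i : g)
    rw [hTapp]
    simp only [LinearMap.zero_apply, ZeroMemClass.coe_zero]
    exact hDD u (i : g) hu (hID i.2)
  have hTcomm : ∀ u v : g, T u * T v = T v * T u := by
    intro u v
    ext i
    show (((T u * T v) i : ↥I) : g) = (((T v * T u) i : ↥I) : g)
    have h0 : ⁅⁅u, v⁆, (i : g)⁆ = 0 := hDD _ _ (hDbr u v) (hID i.2)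
    rw [lie_lie] at h0
    simp only [Module.End.mul_apply, hTapp]
    exact sub_eq_zero.mp h0
  -- commutative algebra generated by the T u
  let S : Set (Module.End k ↥I) := Set.range (fun u : g => T u)
  let Z : Subalgebra k (Module.End k ↥I) := Subalgebra.centralizer k S
  let U : Subalgebra k (Module.End k ↥I) := Subalgebra.centralizer k (Z : Set (Module.End k ↥I))
  have hSZ : S ⊆ (Z : Set (Module.End k ↥I)) := by
    rintro _ ⟨u, rfl⟩
    rw [SetLike.mem_coe, Subalgebra.mem_centralizer_iff]
    rintro _ ⟨v, rfl⟩
    exact hTcomm v u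
  have hSU : ∀ u : g, T u ∈ U := by
    intro u
    rw [Subalgebra.mem_centralizer_iff]
    intro z hz
    exact ((Subalgebra.mem_centralizer_iff k).mp hz (T u) ⟨u, rfl⟩).symm
  have hUZ : (U : Set (Module.End k ↥I)) ⊆ (Z : Set (Module.End k ↥I)) :=
    Set.centralizer_subset hSZ
  have hUcomm : ∀ a b : ↥U, (a : Module.End k ↥I) * b = (b : Module.End k ↥I) * a := by
    intro a b
    exact (Subalgebra.mem_centralizer_iff k).mp b.2 (a : Module.End k ↥I) (hUZ a.2)
  letI : CommRing ↥U :=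
    { (inferInstance : Ring ↥U) with
      mul_comm := fun a b => Subtype.ext (hUcomm a b) }
  letI : Module ↥U ↥I := Module.compHom ↥I (U.val.toRingHom)
  have hsmulU : ∀ (r : ↥U) (m : ↥I), r • m = (r : Module.End k ↥I) m := fun r m => rfl
  letI : IsScalarTower k ↥U ↥I := by
    constructor
    intro c r m
    rw [hsmulU, hsmulU]
    show ((c • (r : Module.End k ↥I))) m = c • ((r : Module.End k ↥I) m)
    rw [LinearMap.smul_apply]
  have halgU : ∀ (c : k) (x : ↥I), (algebraMap k ↥U c) • x = c • x := by
    intro c x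
    rw [hsmulU]
    show ((algebraMap k ↥U c : ↥U) : Module.End k ↥I) x = c • x
    rw [Subalgebra.coe_algebraMap]
    exact Module.algebraMap_end_apply k k ↥I c x
  have hfg : (⊤ : Submodule ↥U ↥I).FG := by
    obtain ⟨sfin, hsfin⟩ := Module.finite_def.mp (inferInstance : Module.Finite k ↥I)
    refine ⟨sfin, le_antisymm le_top ?_⟩
    intro m hmem
    clear hmem
    have hm : m ∈ Submodule.span k (sfin : Set ↥I) := by rw [hsfin]; trivial
    induction hm using Submodule.span_induction with
    | mem x hx => exact Submodule.subset_span hx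
    | zero => exact Submodule.zero_mem _
    | add x y _ _ hx hy => exact Submodule.add_mem _ hx hy
    | smul c x _ hx =>
      rw [← halgU c x]
      exact Submodule.smul_mem _ _ hx
  -- Nakayama
  let J : Ideal ↥U := Ideal.span (Set.range fun u : g => (⟨T u, hSU u⟩ : ↥U))
  have hle : (⊤ : Submodule ↥U ↥I) ≤ J • (⊤ : Submodule ↥U ↥I) := by
    intro m _
    have hm : (m : g) ∈ ⁅(⊤ : LieIdeal k g), I⁆ := by rw [hII]; exact m.2
    have hm' : (m : g) ∈ Submodule.span k
        { w : g | ∃ x ∈ (⊤ : LieIdeal k g), ∃ b ∈ I, ⁅x, b⁆ = w } := by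
      rw [← LieSubmodule.lieIdeal_oper_eq_linear_span']
      exact (LieSubmodule.mem_toSubmodule _).mpr hm
    have hsple : Submodule.span k { w : g | ∃ x ∈ (⊤ : LieIdeal k g), ∃ b ∈ I, ⁅x, b⁆ = w }
        ≤ (I : Submodule k g) := by
      rw [Submodule.span_le]
      rintro _ ⟨x, -, b, hb, rfl⟩
      exact I.lie_mem hb
    have main : ∀ w (hw : w ∈ Submodule.span k
        { w : g | ∃ x ∈ (⊤ : LieIdeal k g), ∃ b ∈ I, ⁅x, b⁆ = w }),
        (⟨w, hsple hw⟩ : ↥I) ∈ J • (⊤ : Submodule ↥U ↥I) := by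
      intro w hw
      induction hw using Submodule.span_induction with
      | mem x hx =>
        obtain ⟨a, -, b, hb, rfl⟩ := hx
        have : (⟨⁅a, b⁆, hsple (Submodule.subset_span ⟨a, trivial, b, hb, rfl⟩)⟩ : ↥I)
            = (⟨T a, hSU a⟩ : ↥U) • (⟨b, hb⟩ : ↥I) := by
          apply Subtype.ext
          rfl
        rw [this]
        exact @Submodule.smul_mem_smul _ _ _ _ _ _ _ _ _ (IsScalarTower.left _) _ _ _ _
          (Ideal.subset_span ⟨a, rfl⟩) trivial
      | zero =>
        have : (⟨(0 : g), hsple (Submodule.zero_mem _)⟩ : ↥I) = 0 := rfl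
        rw [this]; exact Submodule.zero_mem _
      | add x y hx hy ihx ihy =>
        have : (⟨x + y, hsple (Submodule.add_mem _ hx hy)⟩ : ↥I)
            = (⟨x, hsple hx⟩ : ↥I) + (⟨y, hsple hy⟩ : ↥I) := rfl
        rw [this]; exact Submodule.add_mem _ ihx ihy
      | smul c x hx ihx =>
        have : (⟨c • x, hsple (Submodule.smul_mem _ c hx)⟩ : ↥I)
            = (algebraMap k ↥U c) • (⟨x, hsple hx⟩ : ↥I) := by
          apply Subtype.ext
          rw [halgU]
          rfl
        rw [this]
        exact Submodule.smul_mem _ _ ihx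
    have := main (m : g) hm'
    have heqm : (⟨(m : g), hsple hm'⟩ : ↥I) = m := Subtype.ext rfl
    rwa [heqm] at this
  obtain ⟨r, hr1, hr2⟩ :=
    Submodule.exists_sub_one_mem_and_smul_eq_zero_of_fg_of_le_smul J ⊤ hfg hle
  have hidr : ∀ m : ↥I, ((1 - r : ↥U) : Module.End k ↥I) m = m := by
    intro m
    have h0 : (r : Module.End k ↥I) m = 0 := by rw [← hsmulU]; exact hr2 m trivial
    rw [Subalgebra.coe_sub, LinearMap.sub_apply, h0, sub_zero]; rfl
  have hrJ : (1 - r : ↥U) ∈ J := by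
    rw [← neg_sub r (1 : ↥U)]
    exact neg_mem hr1
  obtain ⟨nn, cf, gf, hsum⟩ := Submodule.mem_span_set'.mp hrJ
  -- extract the generators
  have hgen : ∀ i : Fin nn, ∃ u : g, ((gf i : ↥U) : Module.End k ↥I) = T u := by
    intro i
    obtain ⟨u, hu⟩ := (gf i).2
    exact ⟨u, by rw [← hu]⟩
  choose us hus using hgen
  let Fs : Fin nn → Module.End k ↥I := fun i => ((cf i : ↥U) : Module.End k ↥I)
  have hcommF : ∀ (i : Fin nn) (v : g), Fs i * T v = T v * Fs i := by
    intro i v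
    have hTvZ : T v ∈ (Z : Set (Module.End k ↥I)) := hSZ ⟨v, rfl⟩
    exact ((Subalgebra.mem_centralizer_iff k).mp (cf i).2 (T v) hTvZ).symm
  have hidT : ∀ m : ↥I, ∑ i : Fin nn, Fs i (T (us i) m) = m := by
    intro m
    have happ := congrArg (fun (t : ↥U) => ((t : Module.End k ↥I) m)) hsum
    beta_reduce at happ
    rw [hidr] at happ
    conv_rhs => rw [← happ]
    have hcoe : ((↑(∑ i : Fin nn, cf i • (gf i : ↥U)) : Module.End k ↥I))
        = ∑ i : Fin nn, ((cf i : ↥U) : Module.End k ↥I) * ((gf i : ↥U) : Module.End k ↥I) := by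
      push_cast
      rfl
    rw [hcoe, LinearMap.sum_apply]
    refine Finset.sum_congr rfl fun i _ => ?_
    rw [Module.End.mul_apply, hus i]
  -- transfer everything to the quotient
  have hdiffI : ∀ v : g, s₀ (πh v) - v ∈ I := by
    intro v
    rw [← hπker]
    rw [map_sub]
    rw [show πh (s₀ (πh v)) = πh.toLinearMap (s₀ (πh v)) from rfl, hs₀]
    rw [sub_self]
  have hTeq : ∀ v : g, T (s₀ (πh v)) = T v := by
    intro v
    rw [← sub_eq_zero, ← map_sub]
    exact hT0 _ (hID (hdiffI v))
  let ρ : (g ⧸ I) →ₗ[k] Module.End k ↥I := T ∘ₗ s₀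
  have hρapp : ∀ x : g ⧸ I, ρ x = T (s₀ x) := fun x => rfl
  have hsbrD : ∀ x y : g ⧸ I, s₀ ⁅x, y⁆ ∈ D := by
    intro x y
    have hdf : s₀ ⁅x, y⁆ - ⁅s₀ x, s₀ y⁆ ∈ I := by
      rw [← hπker, map_sub, hπbr]
      rw [show πh (s₀ ⁅x, y⁆) = πh.toLinearMap (s₀ ⁅x, y⁆) from rfl, hs₀]
      rw [show πh (s₀ x) = πh.toLinearMap (s₀ x) from rfl, hs₀]
      rw [show πh (s₀ y) = πh.toLinearMap (s₀ y) from rfl, hs₀]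
      rw [sub_self]
    have : s₀ ⁅x, y⁆ = (s₀ ⁅x, y⁆ - ⁅s₀ x, s₀ y⁆) + ⁅s₀ x, s₀ y⁆ := by abel
    rw [this]
    exact D.add_mem (hID hdf) (hDbr _ _)
  have hρ0 : ∀ x y : g ⧸ I, ρ ⁅x, y⁆ = 0 := by
    intro x y
    rw [hρapp]
    exact hT0 _ (hsbrD x y)
  have hidρ : ∀ m : ↥I, ∑ i : Fin nn, Fs i ((ρ (πh (us i))) m) = m := by
    intro m
    have : ∀ i : Fin nn, ρ (πh (us i)) = T (us i) := fun i => hTeq (us i)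
    simp only [this]
    exact hidT m
  have hcommρ : ∀ (i : Fin nn) (x : g ⧸ I), Fs i * ρ x = ρ x * Fs i := by
    intro i x
    rw [hρapp]
    exact hcommF i (s₀ x)
  -- the 2-cocycle
  have hωmem : ∀ x y : g ⧸ I, ⁅s₀ x, s₀ y⁆ - s₀ ⁅x, y⁆ ∈ I := by
    intro x y
    have := hsbrD x y
    rw [← hπker, map_sub, hπbr]
    rw [show πh (s₀ ⁅x, y⁆) = πh.toLinearMap (s₀ ⁅x, y⁆) from rfl, hs₀]
    rw [show πh (s₀ x) = πh.toLinearMap (s₀ x) from rfl, hs₀]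
    rw [show πh (s₀ y) = πh.toLinearMap (s₀ y) from rfl, hs₀]
    rw [sub_self]
  let ω : (g ⧸ I) →ₗ[k] (g ⧸ I) →ₗ[k] ↥I := LinearMap.mk₂ k
    (fun x y => (⟨⁅s₀ x, s₀ y⁆ - s₀ ⁅x, y⁆, hωmem x y⟩ : ↥I))
    (fun x₁ x₂ y => by
      apply Subtype.ext
      show ⁅s₀ (x₁ + x₂), s₀ y⁆ - s₀ ⁅x₁ + x₂, y⁆
        = (⁅s₀ x₁, s₀ y⁆ - s₀ ⁅x₁, y⁆) + (⁅s₀ x₂, s₀ y⁆ - s₀ ⁅x₂, y⁆)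
      rw [map_add, add_lie, add_lie, map_add]
      abel)
    (fun c x y => by
      apply Subtype.ext
      show ⁅s₀ (c • x), s₀ y⁆ - s₀ ⁅c • x, y⁆ = c • (⁅s₀ x, s₀ y⁆ - s₀ ⁅x, y⁆)
      rw [map_smul, smul_lie, smul_lie, map_smul, smul_sub])
    (fun x y₁ y₂ => by
      apply Subtype.ext
      show ⁅s₀ x, s₀ (y₁ + y₂)⁆ - s₀ ⁅x, y₁ + y₂⁆
        = (⁅s₀ x, s₀ y₁⁆ - s₀ ⁅x, y₁⁆) + (⁅s₀ x, s₀ y₂⁆ - s₀ ⁅x, y₂⁆)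
      rw [map_add, lie_add, lie_add, map_add]
      abel)
    (fun c x y => by
      apply Subtype.ext
      show ⁅s₀ x, s₀ (c • y)⁆ - s₀ ⁅x, c • y⁆ = c • (⁅s₀ x, s₀ y⁆ - s₀ ⁅x, y⁆)
      rw [map_smul, lie_smul, lie_smul, map_smul, smul_sub])
  have hωapp : ∀ x y : g ⧸ I, ((ω x y : ↥I) : g) = ⁅s₀ x, s₀ y⁆ - s₀ ⁅x, y⁆ :=
    fun x y => rfl
  have halt : ∀ x : g ⧸ I, ω x x = 0 := by
    intro x
    apply Subtype.ext
    rw [hωapp]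
    simp
  have hskg : ∀ a b : g, ⁅a, b⁆ = -⁅b, a⁆ := fun a b => (lie_skew a b).symm
  have hskq : ∀ a b : g ⧸ I, ⁅a, b⁆ = -⁅b, a⁆ := fun a b => (lie_skew a b).symm
  have hco : ∀ x y z : g ⧸ I, ρ x (ω y z) - ρ y (ω x z) + ρ z (ω x y)
      - ω ⁅x, y⁆ z + ω ⁅x, z⁆ y - ω ⁅y, z⁆ x = 0 := by
    intro x y z
    apply Subtype.ext
    push_cast
    have hρco : ∀ (w : g ⧸ I) (i : ↥I), ((ρ w i : ↥I) : g) = ⁅s₀ w, (i : g)⁆ :=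
      fun w i => rfl
    rw [hρco, hρco, hρco, hωapp, hωapp, hωapp, hωapp, hωapp, hωapp]
    show _ = (0 : g)
    have hjacq : s₀ ⁅⁅x, y⁆, z⁆ - s₀ ⁅⁅x, z⁆, y⁆ + s₀ ⁅⁅y, z⁆, x⁆ = 0 := by
      rw [← map_sub, ← map_add, ← map_zero s₀]
      congr 1
      rw [lie_lie, lie_lie, lie_lie, hskq z y, hskq z x, hskq y x]
      simp only [lie_neg]
      rw [hskq z ⁅x, y⁆, lie_lie]
      abel
    have hj2 : s₀ ⁅⁅y, z⁆, x⁆ = s₀ ⁅⁅x, z⁆, y⁆ - s₀ ⁅⁅x, y⁆, z⁆ := by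
      rw [← sub_eq_zero]
      rw [show s₀ ⁅⁅y, z⁆, x⁆ - (s₀ ⁅⁅x, z⁆, y⁆ - s₀ ⁅⁅x, y⁆, z⁆)
        = s₀ ⁅⁅x, y⁆, z⁆ - s₀ ⁅⁅x, z⁆, y⁆ + s₀ ⁅⁅y, z⁆, x⁆ from by abel]
      exact hjacq
    simp only [lie_sub]
    rw [hskg (s₀ ⁅x, y⁆) (s₀ z), hskg (s₀ ⁅x, z⁆) (s₀ y), hskg (s₀ ⁅y, z⁆) (s₀ x)]
    rw [hskg (s₀ z) ⁅s₀ x, s₀ y⁆, lie_lie]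
    rw [hj2]
    abel
  -- integrate the cocycle
  obtain ⟨φ, hφ⟩ := cocycle_integrate ρ hρ0 (fun i => πh (us i)) Fs hcommρ hidρ N hnilq ω halt hco
  -- the Lie algebra section
  let inc : ↥I →ₗ[k] g :=
    { toFun := fun i => (i : g), map_add' := fun a b => rfl, map_smul' := fun c a => rfl }
  let s : (g ⧸ I) →ₗ[k] g := s₀ - inc ∘ₗ φ
  have hsapp : ∀ x : g ⧸ I, s x = s₀ x - (φ x : g) := fun x => rfl
  have hsπ : ∀ x : g ⧸ I, πh (s x) = x := by
    intro x
    rw [hsapp]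
    have h1 : πh (s₀ x) - πh ((φ x : g)) = πh (s₀ x - (φ x : g)) := (map_sub _ _ _).symm
    rw [← h1, (hπker _).mpr (φ x).2, sub_zero]
    exact hs₀ x
  have hsLie : ∀ x y : g ⧸ I, s ⁅x, y⁆ = ⁅s x, s y⁆ := by
    intro x y
    have hkey := congrArg (fun i : ↥I => (i : g)) (hφ x y)
    beta_reduce at hkey
    have hc1 : ((ρ x (φ y) - ρ y (φ x) - φ ⁅x, y⁆ : ↥I) : g)
        = ⁅s₀ x, ((φ y : g))⁆ - ⁅s₀ y, ((φ x : g))⁆ - ((φ ⁅x, y⁆ : g)) := rfl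
    rw [hωapp, hc1] at hkey
    have hφφ : ⁅((φ x : g)), ((φ y : g))⁆ = 0 := hDD _ _ (hID (φ x).2) (hID (φ y).2)
    rw [hsapp, hsapp, hsapp]
    rw [sub_lie, lie_sub, lie_sub, hφφ]
    rw [eq_comm, ← sub_eq_zero]
    rw [show ⁅s₀ x, s₀ y⁆ - ⁅s₀ x, ((φ y : g))⁆ - (⁅((φ x : g)), s₀ y⁆ - 0)
          - (s₀ ⁅x, y⁆ - ((φ ⁅x, y⁆ : g)))
        = (⁅s₀ x, s₀ y⁆ - s₀ ⁅x, y⁆)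
          - (⁅s₀ x, ((φ y : g))⁆ - ⁅s₀ y, ((φ x : g))⁆ - ((φ ⁅x, y⁆ : g)))
          - (⁅((φ x : g)), s₀ y⁆ + ⁅s₀ y, ((φ x : g))⁆) from by abel]
    rw [hkey, sub_self, zero_sub, neg_eq_zero, hskg ((φ x : g)) (s₀ y)]
    abel
  -- properties of s
  have hsD : ∀ w : g ⧸ I, w ∈ Submodule.span k {z : g ⧸ I | ∃ a b : g ⧸ I, z = ⁅a, b⁆}
      → s w ∈ D := by
    intro w hw
    induction hw using Submodule.span_induction with
    | mem w hw => obtain ⟨a, b, rfl⟩ := hw; rw [hsLie]; exact hDbr _ _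
    | zero => rw [map_zero]; exact D.zero_mem
    | add a b _ _ ha hb => rw [map_add]; exact D.add_mem ha hb
    | smul c a _ ha => rw [map_smul]; exact D.smul_mem c ha
  have hmulD : ∀ x y : g ⧸ I, s (mul x y) ∈ D := fun x y => hsD _ (hsub x y)
  have hPI : ∀ v : g, v - s (πh v) ∈ I := by
    intro v
    rw [← hπker, map_sub, hsπ, sub_self]
  -- the LR structure
  let P : g →ₗ[k] g := s ∘ₗ πh.toLinearMap
  have hPapp : ∀ v : g, P v = s (πh v) := fun v => rfl
  have hPI' : ∀ v : g, v - P v ∈ I := fun v => hPI v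
  let mul' : g →ₗ[k] g →ₗ[k] g := LinearMap.mk₂ k
    (fun u v => ⁅u, v - P v⁆ + s (mul (πh u) (πh v)))
    (fun u₁ u₂ v => by
      beta_reduce
      have : πh (u₁ + u₂) = πh u₁ + πh u₂ := map_add _ _ _
      rw [this, add_lie, map_add, LinearMap.add_apply, map_add]
      abel)
    (fun c u v => by
      beta_reduce
      have : πh (c • u) = c • πh u := map_smul _ _ _
      rw [this, smul_lie, map_smul, LinearMap.smul_apply, map_smul, smul_add])
    (fun u v₁ v₂ => by
      beta_reduce
      have h1 : πh (v₁ + v₂) = πh v₁ + πh v₂ := map_add _ _ _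
      rw [h1, map_add, map_add, map_add]
      rw [show v₁ + v₂ - (P v₁ + P v₂) = (v₁ - P v₁) + (v₂ - P v₂) from by abel]
      rw [lie_add]
      abel)
    (fun c u v => by
      beta_reduce
      have h1 : πh (c • v) = c • πh v := map_smul _ _ _
      rw [h1, map_smul, map_smul, map_smul]
      rw [show c • v - c • P v = c • (v - P v) from by rw [smul_sub]]
      rw [lie_smul, smul_add])
  have happ' : ∀ u v : g, mul' u v = ⁅u, v - P v⁆ + s (mul (πh u) (πh v)) :=
    fun u v => rfl
  have hπmul' : ∀ u v : g, πh (mul' u v) = mul (πh u) (πh v) := by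
    intro u v
    rw [happ', map_add]
    rw [(hπker _).mpr (I.lie_mem (hPI' v)), zero_add]
    exact hsπ _
  have hW : ∀ u v : g, mul' u v - P (mul' u v) = ⁅u, v - P v⁆ := by
    intro u v
    rw [hPapp, hπmul', happ']
    abel
  refine ⟨mul', ?_, ?_, ?_⟩
  · -- left symmetry
    intro x y z
    rw [happ' x (mul' y z), happ' y (mul' x z), hW, hW, hπmul', hπmul']
    rw [hL (πh x) (πh y) (πh z)]
    congr 1
    have h0 : ⁅⁅x, y⁆, z - P z⁆ = 0 := hDD _ _ (hDbr x y) (hID (hPI' z))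
    rw [lie_lie] at h0
    exact (sub_eq_zero.mp h0)
  · -- right symmetry
    intro x y z
    have hz : ∀ u w : g, mul' (mul' u w) z = s (mul (mul (πh u) (πh w)) (πh z)) := by
      intro u w
      rw [happ' (mul' u w) z, hπmul', happ' u w, add_lie]
      rw [hDD _ _ (hDbr u (w - P w)) (hID (hPI' z))]
      rw [hDD _ _ (hmulD (πh u) (πh w)) (hID (hPI' z))]
      rw [add_zero, zero_add]
    have hy : ∀ u w : g, mul' (mul' u w) y = s (mul (mul (πh u) (πh w)) (πh y)) := by
      intro u w
      rw [happ' (mul' u w) y, hπmul', happ' u w, add_lie]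
      rw [hDD _ _ (hDbr u (w - P w)) (hID (hPI' y))]
      rw [hDD _ _ (hmulD (πh u) (πh w)) (hID (hPI' y))]
      rw [add_zero, zero_add]
    rw [hz x y, hy x z, hR (πh x) (πh y) (πh z)]
  · -- compatibility
    intro u v
    rw [happ' u v, happ' v u]
    have hmm : mul (πh u) (πh v) - mul (πh v) (πh u) = ⁅πh u, πh v⁆ := hcompat _ _
    have hss : s ⁅πh u, πh v⁆ = ⁅P u, P v⁆ := by
      rw [hsLie, hPapp, hPapp]
    have ha : ⁅u - P u, v - P v⁆ = 0 := hDD _ _ (hID (hPI' u)) (hID (hPI' v))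
    rw [show ⁅u, v - P v⁆ + s (mul (πh u) (πh v)) - (⁅v, u - P u⁆ + s (mul (πh v) (πh u)))
        = ⁅u, v - P v⁆ - ⁅v, u - P u⁆ + (s (mul (πh u) (πh v)) - s (mul (πh v) (πh u)))
        from by abel]
    rw [← map_sub, hmm, hss]
    rw [lie_sub, lie_sub, hskg v u, hskg v (P u)]
    rw [← sub_eq_zero]
    rw [show ⁅u, v⁆ - ⁅u, P v⁆ - (-⁅u, v⁆ - -⁅P u, v⁆) + ⁅P u, P v⁆ - ⁅u, v⁆
        = (⁅u, v⁆ - ⁅u, P v⁆ - ⁅P u, v⁆ + ⁅P u, P v⁆) from by abel]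
    rw [show ⁅u, v⁆ - ⁅u, P v⁆ - ⁅P u, v⁆ + ⁅P u, P v⁆ = ⁅u - P u, v - P v⁆ from by
      rw [sub_lie, lie_sub, lie_sub]; abel]
    exact ha
end
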